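/- arXiv:2207.12514 — 8 statements merged into one kernel-verified Lean document; each statement's English description precedes it below -/
import Mathlib

section
/- Let α, β ∈ (0,1) with α > β, and let D be a distribution over {0,1}^n that is β-close in Earth Mover Distance to some (α,r)-clusterable distribution. Then D is (β/α, 3α, r)-clusterable: there is a partition C₀, C₁, …, C_s of {0,1}^n with s ≤ r, D(C₀) ≤ β/α, and for every 1 ≤ i ≤ s and all U, V ∈ C_i, d_H(U,V) ≤ 3α. -/
/-- The normalized Hamming distance on the Boolean cube `{0,1}^n`. -/
noncomputable def nHam {n : ℕ} (x y : Fin n → Bool) : ℝ :=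
  (hammingDist x y : ℝ) / n

/-- `D` is a probability distribution on a finite set: nonnegative with total mass 1. -/
def IsDist {Ω : Type*} [Fintype Ω] (D : Ω → ℝ) : Prop :=
  (∀ x, 0 ≤ D x) ∧ ∑ x, D x = 1

/-- `f` is a valid transportation flow from `D₁` to `D₂`. -/
def IsFlow {n : ℕ} (D₁ D₂ : (Fin n → Bool) → ℝ)
    (f : (Fin n → Bool) → (Fin n → Bool) → ℝ) : Prop :=
  (∀ x y, 0 ≤ f x y) ∧ (∀ x, ∑ y, f x y = D₁ x) ∧ (∀ y, ∑ x, f x y = D₂ y)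

/-- The Earth Mover Distance between two distributions on `{0,1}^n`, with respect to
the normalized Hamming distance: the infimum of the costs of valid flows. -/
noncomputable def emd {n : ℕ} (D₁ D₂ : (Fin n → Bool) → ℝ) : ℝ :=
  sInf { c | ∃ f, IsFlow D₁ D₂ f ∧ ∑ x, ∑ y, f x y * nHam x y = c }

/-- A distribution `D` over `{0,1}^n` is `(ζ,δ,r)`-clusterable: `{0,1}^n` can be
partitioned into `C₀, C₁, …, C_s` with `s ≤ r`, `D(C₀) ≤ ζ`, and each `C i` (`i ≥ 1`)
of normalized Hamming diameter at most `δ`. -/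
def Clusterable {n : ℕ} (ζ δ : ℝ) (r : ℕ) (D : (Fin n → Bool) → ℝ) : Prop :=
  ∃ (s : ℕ) (C : Fin (s + 1) → Finset (Fin n → Bool)),
    s ≤ r ∧
    (∀ i j, i ≠ j → Disjoint (C i) (C j)) ∧
    (∀ x, ∃ i, x ∈ C i) ∧
    (∑ x ∈ C 0, D x ≤ ζ) ∧
    (∀ i : Fin (s + 1), i ≠ 0 → ∀ x ∈ C i, ∀ y ∈ C i, nHam x y ≤ δ)

/-- Let `α, β ∈ (0,1)` with `α > β`, and let `D` be β-close in Earth Mover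
Distance to some `(α,r)`-clusterable distribution (i.e. `(0,α,r)`-clusterable).
Then `D` is `(β/α, 3α, r)`-clusterable. -/
theorem stmt_5 {n : ℕ} (α β : ℝ) (r : ℕ)
    (hα : 0 < α) (hα1 : α < 1) (hβ : 0 < β) (hβ1 : β < 1) (hβα : β < α)
    (D : (Fin n → Bool) → ℝ) (hD : IsDist D)
    (hclose : ∃ D₀, IsDist D₀ ∧ Clusterable 0 α r D₀ ∧ emd D D₀ ≤ β) :
    Clusterable (β / α) (3 * α) r D := by
  classical
  obtain ⟨D₀, hD₀, ⟨s, C, hsr, hdisj, hcov, hC0, hdiam⟩, hemd⟩ := hclose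
  have hnH_nonneg : ∀ x y : Fin n → Bool, 0 ≤ nHam x y := fun x y =>
    div_nonneg (Nat.cast_nonneg _) (Nat.cast_nonneg _)
  have hnH_comm : ∀ x y : Fin n → Bool, nHam x y = nHam y x := fun x y => by
    unfold nHam; rw [hammingDist_comm]
  have hnH_tri : ∀ x y z : Fin n → Bool, nHam x z ≤ nHam x y + nHam y z := by
    intro x y z
    unfold nHam
    rw [← add_div]
    apply div_le_div_of_nonneg_right _ _
    · exact_mod_cast hammingDist_triangle x y z
    all_goals positivity
  -- D₀ vanishes on C 0
  have hzero : ∀ y ∈ C 0, D₀ y = 0 := by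
    intro y hy
    have h1 := hD₀.1 y
    have h2 := Finset.single_le_sum (f := D₀) (fun x _ => hD₀.1 x) hy
    linarith
  -- assignment function
  set g : (Fin n → Bool) → Fin (s + 1) := fun x =>
    if h : ∃ i : Fin (s + 1), i ≠ 0 ∧ ∃ y ∈ C i, nHam x y ≤ α then h.choose else 0 with hg
  have hg_spec : ∀ x, g x ≠ 0 → ∃ y ∈ C (g x), nHam x y ≤ α := by
    intro x hx
    by_cases h : ∃ i : Fin (s + 1), i ≠ 0 ∧ ∃ y ∈ C i, nHam x y ≤ α
    · have he : g x = h.choose := by simp only [hg, dif_pos h]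
      rw [he]; exact h.choose_spec.2
    · have he : g x = 0 := by simp only [hg, dif_neg h]
      exact absurd he hx
  have hg_zero : ∀ x, g x = 0 → ∀ i : Fin (s + 1), i ≠ 0 → ∀ y ∈ C i, α < nHam x y := by
    intro x hx i hi y hy
    by_contra hle
    push_neg at hle
    have h : ∃ i : Fin (s + 1), i ≠ 0 ∧ ∃ y ∈ C i, nHam x y ≤ α := ⟨i, hi, y, hy, hle⟩
    have : g x = h.choose := by simp only [hg]; rw [dif_pos h]
    exact h.choose_spec.1 (this ▸ hx)
  refine ⟨s, fun i => Finset.univ.filter (fun x => g x = i), hsr, ?_, ?_, ?_, ?_⟩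
  · intro i j hij
    rw [Finset.disjoint_left]
    intro x hx hx'
    simp only [Finset.mem_filter] at hx hx'
    exact hij (hx.2 ▸ hx'.2 ▸ rfl)
  · intro x
    exact ⟨g x, Finset.mem_filter.2 ⟨Finset.mem_univ x, rfl⟩⟩
  · -- the mass bound
    set T := ∑ x ∈ Finset.univ.filter (fun x => g x = (0 : Fin (s + 1))), D x with hT
    set S := { c | ∃ f, IsFlow D D₀ f ∧ ∑ x, ∑ y, f x y * nHam x y = c } with hS
    have key : ∀ c ∈ S, α * T ≤ c := by
      rintro c ⟨f, ⟨hf0, hf1, hf2⟩, rfl⟩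
      have hfzero : ∀ x y, y ∈ C 0 → f x y = 0 := by
        intro x y hy
        have h1 : ∑ x, f x y = 0 := by rw [hf2 y, hzero y hy]
        have h2 := Finset.single_le_sum (f := fun x => f x y) (fun x _ => hf0 x y)
          (Finset.mem_univ x)
        have := hf0 x y
        linarith
      have step1 : ∀ x, g x = 0 → α * D x ≤ ∑ y, f x y * nHam x y := by
        intro x hx
        rw [← hf1 x, Finset.mul_sum]
        apply Finset.sum_le_sum
        intro y _
        obtain ⟨i, hyi⟩ := hcov y
        by_cases hi : i = 0
        · rw [hfzero x y (hi ▸ hyi)]; simp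
        · have := hg_zero x hx i hi y hyi
          have := hf0 x y
          nlinarith
      calc α * T = ∑ x ∈ Finset.univ.filter (fun x => g x = (0 : Fin (s + 1))), α * D x := by
            rw [hT, Finset.mul_sum]
        _ ≤ ∑ x ∈ Finset.univ.filter (fun x => g x = (0 : Fin (s + 1))),
              ∑ y, f x y * nHam x y := by
            apply Finset.sum_le_sum
            intro x hx
            exact step1 x (Finset.mem_filter.1 hx).2
        _ ≤ ∑ x, ∑ y, f x y * nHam x y := by
            apply Finset.sum_le_sum_of_subset_of_nonneg (Finset.filter_subset _ _)
            intro x _ _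
            exact Finset.sum_nonneg fun y _ => mul_nonneg (hf0 x y) (hnH_nonneg x y)
    have hne : S.Nonempty := by
      refine ⟨∑ x, ∑ y, (D x * D₀ y) * nHam x y, fun x y => D x * D₀ y, ⟨?_, ?_, ?_⟩, rfl⟩
      · exact fun x y => mul_nonneg (hD.1 x) (hD₀.1 y)
      · intro x; rw [← Finset.mul_sum, hD₀.2, mul_one]
      · intro y; rw [← Finset.sum_mul, hD.2, one_mul]
    have hbdd : BddBelow S := by
      refine ⟨0, ?_⟩
      rintro c ⟨f, ⟨hf0, _, _⟩, rfl⟩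
      exact Finset.sum_nonneg fun x _ =>
        Finset.sum_nonneg fun y _ => mul_nonneg (hf0 x y) (hnH_nonneg x y)
    have hmain : ∀ ε > (0 : ℝ), α * T ≤ β + ε := by
      intro ε hε
      have hlt : sInf S < β + ε := lt_of_le_of_lt hemd (by linarith)
      obtain ⟨c, hcS, hclt⟩ := (csInf_lt_iff hbdd hne).1 hlt
      exact le_trans (key c hcS) hclt.le
    have : α * T ≤ β := le_of_forall_pos_le_add hmain
    rw [le_div_iff₀ hα]
    linarith
  · intro i hi x hx y hy
    have hgx := (Finset.mem_filter.1 hx).2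
    have hgy := (Finset.mem_filter.1 hy).2
    obtain ⟨u, hu, hxu⟩ := hg_spec x (by rw [hgx]; exact hi)
    obtain ⟨v, hv, hyv⟩ := hg_spec y (by rw [hgy]; exact hi)
    rw [hgx] at hu
    rw [hgy] at hv
    have huv : nHam u v ≤ α := hdiam i hi u hu v hv
    have h1 := hnH_tri x u y
    have h2 := hnH_tri u v y
    have h3 : nHam v y = nHam y v := hnH_comm v y
    linarith
end

section
/- Let D be a distribution that is β-close in Earth Mover Distance to an (α,r)-clusterable distribution D₀, whose clustering is realized by clusters C₁,…,C_s of its support. Let C = ⋃ C_i, and let C_{>α} be the set of all vectors in {0,1}^n at normalized Hamming distance greater than α from every vector of C. Then D(C_{>α}) ≤ β/α. -/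
open scoped Classical in
/-- Let `D` be β-close in EMD to an `(α,r)`-clusterable distribution `D₀`
whose clustering is realized by clusters `C₁,…,C_s` of its support. Then the `D`-mass of
the set of vectors at normalized Hamming distance greater than `α` from every vector of
`⋃ C i` is at most `β / α`. -/
theorem stmt_6 {n : ℕ} (α β : ℝ) (r s : ℕ) (hα : 0 < α) (hα1 : α < 1)
    (D D₀ : (Fin n → Bool) → ℝ) (hD : IsDist D) (hD₀ : IsDist D₀)
    (C : Fin s → Finset (Fin n → Bool))
    (hs : s ≤ r)
    (hdisj : ∀ i j, i ≠ j → Disjoint (C i) (C j))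
    (hsupp : ∀ x, D₀ x ≠ 0 → ∃ i, x ∈ C i)
    (hdiam : ∀ i, ∀ x ∈ C i, ∀ y ∈ C i, nHam x y ≤ α)
    (hemd : emd D D₀ ≤ β) :
    ∑ x ∈ Finset.univ.filter (fun x => ∀ i, ∀ y ∈ C i, α < nHam x y), D x ≤ β / α := by
  set F := Finset.univ.filter (fun x : Fin n → Bool => ∀ i, ∀ y ∈ C i, α < nHam x y) with hF
  set S := { c | ∃ f, IsFlow D D₀ f ∧ ∑ x, ∑ y, f x y * nHam x y = c } with hS
  have hnHam_nonneg : ∀ x y : Fin n → Bool, 0 ≤ nHam x y := by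
    intro x y
    exact div_nonneg (Nat.cast_nonneg _) (Nat.cast_nonneg _)
  have hSne : S.Nonempty := by
    refine ⟨∑ x, ∑ y, (D x * D₀ y) * nHam x y, fun x y => D x * D₀ y, ⟨?_, ?_, ?_⟩, rfl⟩
    · exact fun x y => mul_nonneg (hD.1 x) (hD₀.1 y)
    · intro x; rw [← Finset.mul_sum, hD₀.2, mul_one]
    · intro y; rw [← Finset.sum_mul, hD.2, one_mul]
  -- key bound: for any flow f with cost c, α * ∑_{x∈F} D x ≤ c
  have key : ∀ c ∈ S, α * ∑ x ∈ F, D x ≤ c := by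
    rintro c ⟨f, ⟨hf0, hfrow, hfcol⟩, rfl⟩
    have step : ∀ x ∈ F, ∀ y : Fin n → Bool, α * f x y ≤ f x y * nHam x y := by
      intro x hx y
      rcases eq_or_lt_of_le (hf0 x y) with h | h
      · rw [← h]; simp
      · have hle : f x y ≤ D₀ y := by
          rw [← hfcol y]
          exact Finset.single_le_sum (fun z _ => hf0 z y) (Finset.mem_univ x)
        have hD₀y : D₀ y ≠ 0 := by intro h; rw [h] at hle; linarith
        obtain ⟨i, hi⟩ := hsupp y hD₀y
        have hxF := (Finset.mem_filter.mp hx).2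
        have := hxF i y hi
        nlinarith
    calc α * ∑ x ∈ F, D x = ∑ x ∈ F, ∑ y, α * f x y := by
          rw [Finset.mul_sum]
          refine Finset.sum_congr rfl fun x _ => ?_
          rw [← Finset.mul_sum, hfrow x]
      _ ≤ ∑ x ∈ F, ∑ y, f x y * nHam x y := by
          refine Finset.sum_le_sum fun x hx => Finset.sum_le_sum fun y _ => step x hx y
      _ ≤ ∑ x, ∑ y, f x y * nHam x y := by
          refine Finset.sum_le_sum_of_subset_of_nonneg (Finset.filter_subset _ _) ?_
          intro x _ _
          exact Finset.sum_nonneg fun y _ => mul_nonneg (hf0 x y) (hnHam_nonneg x y)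
  have main : α * ∑ x ∈ F, D x ≤ β := by
    refine le_of_forall_pos_le_add fun ε hε => ?_
    obtain ⟨c, hcS, hclt⟩ := Real.lt_sInf_add_pos hSne hε
    have := key c hcS
    have hinf : sInf S ≤ β := hemd
    linarith
  rw [le_div_iff₀ hα]
  linarith [main]
end

section
/- Let D₁ and D₂ be distributions over {0,1}^n admitting corresponding matrices L and M respectively, both of dimension s × n (each distribution is obtained by choosing a uniformly random row of its matrix). Then the Earth Mover Distance between D₁ and D₂ equals the minimum over all permutations π of [s] of the normalized Hamming distance between L^π and M, where d_H(L,M) = |{(i,j) : L_{ij} ≠ M_{ij}}|/(s·n) and L^π is L with rows permuted by π. -/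
/-- The distribution on `{0,1}^n` obtained by choosing a uniformly random row of the
`s × n` matrix `L`. -/
noncomputable def rowDist {s n : ℕ} (L : Fin s → Fin n → Bool) : (Fin n → Bool) → ℝ :=
  fun x => ((Finset.univ.filter (fun i => L i = x)).card : ℝ) / s

/-- The normalized Hamming distance between two `s × n` Boolean matrices:
the fraction of mismatching entries. -/
noncomputable def matDist {s n : ℕ} (L M : Fin s → Fin n → Bool) : ℝ :=
  (∑ i, (hammingDist (L i) (M i) : ℝ)) / (s * n)

private lemma card_filter_perm {s : ℕ} {X : Type*} [DecidableEq X] (L : Fin s → X)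
    (π : Equiv.Perm (Fin s)) (x : X) :
    (Finset.univ.filter (fun i => L (π i) = x)).card
      = (Finset.univ.filter (fun i => L i = x)).card := by
  apply Finset.card_bij (fun i _ => π i)
  · intro i hi; simpa using (Finset.mem_filter.1 hi).2
  · intro i _ j _ h; exact π.injective h
  · intro j hj
    exact ⟨π.symm j, by simpa using (Finset.mem_filter.1 hj).2, by simp⟩


private lemma sum_fiber {α β : Type*} [Fintype α] [Fintype β] [DecidableEq β]
    (f : α → β) (g : β → ℝ) :
    ∑ a, g (f a) = ∑ b, ((Finset.univ.filter (fun a => f a = b)).card : ℝ) * g b := by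
  rw [← Finset.sum_fiberwise_of_maps_to (fun x _ => Finset.mem_univ (f x)) (fun a => g (f a))]
  refine Finset.sum_congr rfl fun b _ => ?_
  rw [Finset.sum_congr rfl (g := fun _ => g b)
      (fun a ha => by rw [(Finset.mem_filter.1 ha).2]),
    Finset.sum_const, nsmul_eq_mul]

private lemma permMatrix_apply {s : ℕ} (σ : Equiv.Perm (Fin s)) (i j : Fin s) :
    σ.permMatrix ℝ i j = if σ i = j then 1 else 0 := by
  simp [Equiv.Perm.permMatrix, PEquiv.toMatrix_apply, Equiv.toPEquiv_apply]


private lemma div_helper₁ (d c e : ℝ) (hd : d ≠ 0) : d * (e / (c * d)) = e / c := by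
  rcases eq_or_ne c 0 with rfl | hc
  · simp
  · field_simp

private lemma div_helper₂ (c d e : ℝ) (hc : c ≠ 0) : c * (e / (c * d)) = e / d := by
  rcases eq_or_ne d 0 with rfl | hd
  · simp [mul_comm]
  · field_simp

set_option maxHeartbeats 1000000 in
private lemma cost_ge {s n : ℕ} (hs : 0 < s) (L M : Fin s → Fin n → Bool)
    (f : (Fin n → Bool) → (Fin n → Bool) → ℝ)
    (hf : IsFlow (rowDist L) (rowDist M) f) :
    (⨅ π : Equiv.Perm (Fin s), matDist (fun i => L (π i)) M)
      ≤ ∑ x, ∑ y, f x y * nHam x y := by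
  classical
  obtain ⟨hf0, hf1, hf2⟩ := hf
  have hs0 : (s : ℝ) ≠ 0 := Nat.cast_ne_zero.2 hs.ne'
  set a : (Fin n → Bool) → ℝ := fun x => ((Finset.univ.filter (fun i => L i = x)).card : ℝ)
    with ha_def
  set b : (Fin n → Bool) → ℝ := fun y => ((Finset.univ.filter (fun i => M i = y)).card : ℝ)
    with hb_def
  have ha_nonneg : ∀ x, 0 ≤ a x := fun x => Nat.cast_nonneg _
  have hb_nonneg : ∀ y, 0 ≤ b y := fun y => Nat.cast_nonneg _
  have hf1' : ∀ x, ∑ y, f x y = a x / s := fun x => by rw [hf1]; rfl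
  have hf2' : ∀ y, ∑ x, f x y = b y / s := fun y => by rw [hf2]; rfl
  have haL : ∀ i, a (L i) ≠ 0 := by
    intro i
    have h1 : i ∈ Finset.univ.filter (fun j => L j = L i) := by simp
    have h2 := Finset.card_pos.2 ⟨i, h1⟩
    positivity
  have hbM : ∀ j, b (M j) ≠ 0 := by
    intro j
    have h1 : j ∈ Finset.univ.filter (fun i => M i = M j) := by simp
    have h2 := Finset.card_pos.2 ⟨j, h1⟩
    positivity
  have ha0 : ∀ x, a x = 0 → ∀ y, f x y = 0 := by
    intro x hx y
    have hsum : ∑ y, f x y = 0 := by rw [hf1' x, hx, zero_div]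
    exact (Finset.sum_eq_zero_iff_of_nonneg (fun y _ => hf0 x y)).1 hsum y (Finset.mem_univ y)
  have hb0 : ∀ y, b y = 0 → ∀ x, f x y = 0 := by
    intro y hy x
    have hsum : ∑ x, f x y = 0 := by rw [hf2' y, hy, zero_div]
    exact (Finset.sum_eq_zero_iff_of_nonneg (fun x _ => hf0 x y)).1 hsum x (Finset.mem_univ x)
  -- the doubly stochastic matrix
  set A : Matrix (Fin s) (Fin s) ℝ := fun i j =>
    s * f (L i) (M j) / (a (L i) * b (M j)) with hA_def
  have hA : A ∈ doublyStochastic ℝ (Fin s) := by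
    rw [mem_doublyStochastic_iff_sum]
    refine ⟨fun i j => ?_, ?_, ?_⟩
    · exact div_nonneg (mul_nonneg (Nat.cast_nonneg s) (hf0 _ _))
        (mul_nonneg (ha_nonneg _) (hb_nonneg _))
    · intro i
      have key := sum_fiber M (fun y => s * f (L i) y / (a (L i) * b y))
      rw [show ∑ j, A i j = ∑ j, (fun y => s * f (L i) y / (a (L i) * b y)) (M j) from rfl,
        key]
      have h1 : ∀ y, b y * ((s:ℝ) * f (L i) y / (a (L i) * b y)) = s * f (L i) y / a (L i) := by
        intro y
        rcases eq_or_ne (b y) 0 with h | h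
        · rw [h, hb0 y h (L i)]; simp
        · exact div_helper₁ _ _ _ h
      rw [Finset.sum_congr rfl fun y _ => h1 y]
      have h2 : ∑ y, (s:ℝ) * f (L i) y / a (L i) = (s / a (L i)) * ∑ y, f (L i) y := by
        rw [Finset.mul_sum]
        exact Finset.sum_congr rfl fun y _ => by ring
      rw [h2, hf1' (L i), div_mul_div_comm, mul_comm (s:ℝ) (a (L i))]
      exact div_self (mul_ne_zero (haL i) hs0)
    · intro j
      have key := sum_fiber L (fun x => s * f x (M j) / (a x * b (M j)))
      rw [show ∑ i, A i j = ∑ i, (fun x => s * f x (M j) / (a x * b (M j))) (L i) from rfl,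
        key]
      have h1 : ∀ x, a x * ((s:ℝ) * f x (M j) / (a x * b (M j))) = s * f x (M j) / b (M j) := by
        intro x
        rcases eq_or_ne (a x) 0 with h | h
        · rw [h, ha0 x h (M j)]; simp
        · exact div_helper₂ _ _ _ h
      rw [Finset.sum_congr rfl fun x _ => h1 x]
      have h2 : ∑ x, (s:ℝ) * f x (M j) / b (M j) = (s / b (M j)) * ∑ x, f x (M j) := by
        rw [Finset.mul_sum]
        exact Finset.sum_congr rfl fun x _ => by ring
      rw [h2, hf2' (M j), div_mul_div_comm, mul_comm (s:ℝ) (b (M j))]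
      exact div_self (mul_ne_zero (hbM j) hs0)
  -- key identity
  have hkey : ∑ i, ∑ j, A i j * nHam (L i) (M j)
      = (s : ℝ) * ∑ x, ∑ y, f x y * nHam x y := by
    have step1 : ∀ i, ∑ j, A i j * nHam (L i) (M j)
        = ∑ y, s * f (L i) y * nHam (L i) y / a (L i) := by
      intro i
      have key := sum_fiber M (fun y => s * f (L i) y / (a (L i) * b y) * nHam (L i) y)
      rw [show ∑ j, A i j * nHam (L i) (M j)
          = ∑ j, (fun y => s * f (L i) y / (a (L i) * b y) * nHam (L i) y) (M j) from rfl,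
        key]
      refine Finset.sum_congr rfl fun y _ => ?_
      rcases eq_or_ne (b y) 0 with h | h
      · rw [h, hb0 y h (L i)]; simp
      · rw [show b y * ((s:ℝ) * f (L i) y / (a (L i) * b y) * nHam (L i) y)
            = (b y * ((s:ℝ) * f (L i) y / (a (L i) * b y))) * nHam (L i) y by ring,
          div_helper₁ _ _ _ h]
        ring
    rw [Finset.sum_congr rfl fun i _ => step1 i]
    have key := sum_fiber L (fun x => ∑ y, s * f x y * nHam x y / a x)
    rw [key, Finset.mul_sum]
    refine Finset.sum_congr rfl fun x _ => ?_
    rw [Finset.mul_sum, Finset.mul_sum]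
    refine Finset.sum_congr rfl fun y _ => ?_
    rcases eq_or_ne (a x) 0 with h | h
    · rw [h, ha0 x h y]; simp
    · rw [show a x * ((s:ℝ) * f x y * nHam x y / a x)
          = a x * (((s:ℝ) * f x y * nHam x y) / (a x * 1)) by rw [mul_one],
        div_helper₂ _ _ _ h]
      rw [div_one]
      ring
  -- Birkhoff
  obtain ⟨w, hw0, hw1, hwA⟩ := exists_eq_sum_perm_of_mem_doublyStochastic hA
  set m := ⨅ π : Equiv.Perm (Fin s), matDist (fun i => L (π i)) M with hm
  have hperm : ∀ σ : Equiv.Perm (Fin s),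
      ∑ i, ∑ j, σ.permMatrix ℝ i j * nHam (L i) (M j)
        = (s : ℝ) * matDist (fun i => L (σ⁻¹ i)) M := by
    intro σ
    have inner : ∀ i, ∑ j, σ.permMatrix ℝ i j * nHam (L i) (M j)
        = nHam (L i) (M (σ i)) := by
      intro i
      rw [Finset.sum_congr rfl (g := fun j => if σ i = j then nHam (L i) (M j) else 0)
          (fun j _ => by rw [permMatrix_apply]; split <;> simp_all),
        Finset.sum_ite_eq]
      simp
    rw [Finset.sum_congr rfl fun i _ => inner i]
    have reindex : ∑ i, nHam (L i) (M (σ i))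
        = ∑ i, nHam (L (σ⁻¹ i)) (M i) := by
      rw [← Equiv.sum_comp σ (fun i => nHam (L (σ⁻¹ i)) (M i))]
      simp
    rw [reindex]
    simp only [nHam, matDist, ← Finset.sum_div]
    rw [mul_div_assoc', mul_div_mul_left _ _ hs0]
  have hm_le : ∀ σ : Equiv.Perm (Fin s), m ≤ matDist (fun i => L (σ⁻¹ i)) M := by
    intro σ
    exact ciInf_le (Set.Finite.bddBelow (Set.finite_range _)) σ⁻¹
  have hentry : ∀ i j, A i j = ∑ σ : Equiv.Perm (Fin s), w σ * σ.permMatrix ℝ i j := by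
    intro i j
    rw [← hwA]
    simp [Matrix.sum_apply]
  have hS_ge : (s : ℝ) * m ≤ ∑ i, ∑ j, A i j * nHam (L i) (M j) := by
    calc (s : ℝ) * m = ∑ σ : Equiv.Perm (Fin s), w σ * ((s:ℝ) * m) := by
          rw [← Finset.sum_mul, hw1, one_mul]
      _ ≤ ∑ σ : Equiv.Perm (Fin s), w σ *
            ((s:ℝ) * matDist (fun i => L (σ⁻¹ i)) M) := by
          refine Finset.sum_le_sum fun σ _ => ?_
          exact mul_le_mul_of_nonneg_left
            (mul_le_mul_of_nonneg_left (hm_le σ) (Nat.cast_nonneg s)) (hw0 σ)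
      _ = ∑ σ : Equiv.Perm (Fin s), ∑ i, ∑ j,
            w σ * (σ.permMatrix ℝ i j * nHam (L i) (M j)) := by
          refine Finset.sum_congr rfl fun σ _ => ?_
          rw [← hperm σ, Finset.mul_sum]
          exact Finset.sum_congr rfl fun i _ => by rw [Finset.mul_sum]
      _ = ∑ i, ∑ σ : Equiv.Perm (Fin s), ∑ j,
            w σ * (σ.permMatrix ℝ i j * nHam (L i) (M j)) := Finset.sum_comm
      _ = ∑ i, ∑ j, ∑ σ : Equiv.Perm (Fin s),
            w σ * (σ.permMatrix ℝ i j * nHam (L i) (M j)) := by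
          exact Finset.sum_congr rfl fun i _ => Finset.sum_comm
      _ = ∑ i, ∑ j, A i j * nHam (L i) (M j) := by
          refine Finset.sum_congr rfl fun i _ => Finset.sum_congr rfl fun j _ => ?_
          rw [hentry i j, Finset.sum_mul]
          exact Finset.sum_congr rfl fun σ _ => by ring
  rw [hkey] at hS_ge
  exact le_of_mul_le_mul_left hS_ge (by positivity)


private lemma cost_perm_mem {s n : ℕ} (hs : 0 < s) (L M : Fin s → Fin n → Bool)
    (π : Equiv.Perm (Fin s)) :
    ∃ f, IsFlow (rowDist L) (rowDist M) f ∧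
      ∑ x, ∑ y, f x y * nHam x y = matDist (fun i => L (π i)) M := by
  classical
  set F : (Fin n → Bool) → (Fin n → Bool) → ℝ := fun x y =>
    ((Finset.univ.filter (fun i => L (π i) = x ∧ M i = y)).card : ℝ) / s with hF
  have hs0 : (s : ℝ) ≠ 0 := Nat.cast_ne_zero.2 hs.ne'
  refine ⟨F, ⟨?_, ?_, ?_⟩, ?_⟩
  · intro x y
    exact div_nonneg (Nat.cast_nonneg _) (Nat.cast_nonneg _)
  · intro x
    have hcard : (Finset.univ.filter (fun i => L (π i) = x)).card
        = ∑ y, ((Finset.univ.filter (fun i => L (π i) = x)).filter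
            (fun i => M i = y)).card :=
      Finset.card_eq_sum_card_fiberwise (fun i _ => Finset.mem_univ (M i))
    simp only [Finset.filter_filter] at hcard
    rw [rowDist, ← card_filter_perm L π x, hF]
    simp only [← Finset.sum_div]
    rw [hcard]
    push_cast
    ring
  · intro y
    have hcard : (Finset.univ.filter (fun i => M i = y)).card
        = ∑ x, ((Finset.univ.filter (fun i => M i = y)).filter
            (fun i => L (π i) = x)).card :=
      Finset.card_eq_sum_card_fiberwise (fun i _ => Finset.mem_univ (L (π i)))
    simp only [Finset.filter_filter] at hcard
    rw [rowDist, hF]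
    simp only [← Finset.sum_div]
    rw [hcard]
    push_cast
    simp only [show ∀ (i : Fin s) (x : Fin n → Bool),
        ((M i = y ∧ L (π i) = x)) = ((L (π i) = x ∧ M i = y)) from
      fun i x => propext and_comm]
  · have key := sum_fiber (fun i : Fin s => (L (π i), M i))
      (fun p : (Fin n → Bool) × (Fin n → Bool) => nHam p.1 p.2 / s)
    rw [Fintype.sum_prod_type] at key
    simp only [Prod.mk.injEq] at key
    have : ∑ x, ∑ y, F x y * nHam x y
        = ∑ i, nHam (L (π i)) (M i) / s := by
      rw [key]
      refine Finset.sum_congr rfl fun x _ => Finset.sum_congr rfl fun y _ => ?_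
      rw [hF]
      ring
    rw [this]
    simp only [nHam, matDist, div_div]
    rw [← Finset.sum_div, mul_comm (n:ℝ)]


/-- If `D₁` and `D₂` are the distributions of a uniformly random row of
the `s × n` Boolean matrices `L` and `M` respectively, then the Earth Mover Distance
between `D₁` and `D₂` equals the minimum, over all permutations `π` of the rows, of the
normalized Hamming distance between `L^π` and `M`. -/
theorem stmt_9 {s n : ℕ} (hs : 0 < s) (hn : 0 < n)
    (L M : Fin s → Fin n → Bool) :
    emd (rowDist L) (rowDist M) = ⨅ π : Equiv.Perm (Fin s), matDist (fun i => L (π i)) M := by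
  have hcost_nonneg : ∀ c ∈ { c | ∃ f, IsFlow (rowDist L) (rowDist M) f ∧
      ∑ x, ∑ y, f x y * nHam x y = c }, (0:ℝ) ≤ c := by
    rintro c ⟨f, hf, rfl⟩
    refine Finset.sum_nonneg fun x _ => Finset.sum_nonneg fun y _ =>
      mul_nonneg (hf.1 x y) ?_
    exact div_nonneg (Nat.cast_nonneg _) (Nat.cast_nonneg _)
  apply le_antisymm
  · refine le_ciInf fun π => ?_
    obtain ⟨f, hf, hc⟩ := cost_perm_mem hs L M π
    exact csInf_le ⟨0, hcost_nonneg⟩ ⟨f, hf, hc⟩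
  · refine le_csInf ?_ ?_
    · obtain ⟨f, hf, hc⟩ := cost_perm_mem hs L M 1
      exact ⟨_, f, hf, hc⟩
    · rintro c ⟨f, hf, rfl⟩
      exact cost_ge hs L M f hf
end

section
/- Any property P of distributions over {0,1}^n that is ε-testable by an adaptive algorithm using s samples and q queries is also ε-testable by a non-adaptive algorithm using s samples and at most 2^q − 1 queries. -/
/-- An adaptive tester for distributions over `{0,1}^n`, using `s` samples and `q`
queries. It has a finite coin space `Fin m` with a probability mass function `coin`.
Given the coin outcome and the list of answers received so far, `query` gives the next
query: a pair (sample index, bit index). After `q` queries, `accept` decides the output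
from the coins and the answer history. -/
structure AdaptiveTester (n s q : ℕ) where
  m : ℕ
  coin : Fin m → ℝ
  coin_nonneg : ∀ r, 0 ≤ coin r
  coin_sum : ∑ r, coin r = 1
  query : Fin m → List Bool → Fin s × Fin n
  accept : Fin m → List Bool → Bool

/-- The list of answers obtained after `k` steps of adaptively querying the sampled
vectors `V` with next-query function `qf`. -/
def answers {n s : ℕ} (qf : List Bool → Fin s × Fin n)
    (V : Fin s → Fin n → Bool) : ℕ → List Bool
  | 0 => []
  | k + 1 =>
      let h := answers qf V k
      h ++ [V (qf h).1 (qf h).2]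

/-- The probability that the adaptive tester `T` accepts, when the `s` samples are drawn
independently from the distribution `D`. -/
noncomputable def AdaptiveTester.acceptProb {n s q : ℕ} (T : AdaptiveTester n s q)
    (D : (Fin n → Bool) → ℝ) : ℝ :=
  ∑ r, T.coin r * ∑ V : Fin s → Fin n → Bool,
    (∏ i, D (V i)) * (if T.accept r (answers (T.query r) V q) then 1 else 0)

/-- A non-adaptive tester: all `q` queries are fixed as a function of the coins alone,
before any answers are seen. -/
structure NonAdaptiveTester (n s q : ℕ) where
  m : ℕ
  coin : Fin m → ℝ
  coin_nonneg : ∀ r, 0 ≤ coin r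
  coin_sum : ∑ r, coin r = 1
  query : Fin m → Fin q → Fin s × Fin n
  accept : Fin m → (Fin q → Bool) → Bool

/-- The probability that the non-adaptive tester `T` accepts, when the `s` samples are
drawn independently from the distribution `D`. -/
noncomputable def NonAdaptiveTester.acceptProb {n s q : ℕ} (T : NonAdaptiveTester n s q)
    (D : (Fin n → Bool) → ℝ) : ℝ :=
  ∑ r, T.coin r * ∑ V : Fin s → Fin n → Bool,
    (∏ i, D (V i)) *
      (if T.accept r (fun k => V (T.query r k).1 (T.query r k).2) then 1 else 0)

/-- `D` is `ε`-far (in Earth Mover Distance) from every distribution in the property `P`. -/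
def FarFrom {n : ℕ} (ε : ℝ) (P : Set ((Fin n → Bool) → ℝ))
    (D : (Fin n → Bool) → ℝ) : Prop :=
  ∀ D' ∈ P, ε < emd D D'

/-- The adaptive tester `T` `ε`-tests the property `P`: it accepts members of `P` with
probability at least `2/3` and rejects distributions `ε`-far from `P` with probability
at least `2/3`. -/
def EpsTestsA {n s q : ℕ} (T : AdaptiveTester n s q)
    (P : Set ((Fin n → Bool) → ℝ)) (ε : ℝ) : Prop :=
  (∀ D, IsDist D → D ∈ P → 2 / 3 ≤ T.acceptProb D) ∧
  (∀ D, IsDist D → FarFrom ε P D → T.acceptProb D ≤ 1 / 3)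

/-- The non-adaptive tester `T` `ε`-tests the property `P`. -/
def EpsTestsN {n s q : ℕ} (T : NonAdaptiveTester n s q)
    (P : Set ((Fin n → Bool) → ℝ)) (ε : ℝ) : Prop :=
  (∀ D, IsDist D → D ∈ P → 2 / 3 ≤ T.acceptProb D) ∧
  (∀ D, IsDist D → FarFrom ε P D → T.acceptProb D ≤ 1 / 3)

/-- Encoding of query histories (lists of booleans) as natural numbers. -/
def idxL : List Bool → ℕ
  | [] => 0
  | b :: t => 1 + 2 * idxL t + (if b then 1 else 0)

/-- Decoding: partial inverse of `idxL`. -/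
def decL : ℕ → List Bool
  | 0 => []
  | m + 1 => (m % 2 == 1) :: decL (m / 2)
decreasing_by exact Nat.lt_succ_of_le (Nat.div_le_self _ 2)

lemma dec_idx : ∀ h : List Bool, decL (idxL h) = h := by
  intro h
  induction h with
  | nil => simp [idxL, decL]
  | cons b t ih =>
    have : idxL (b :: t) = (2 * idxL t + (if b then 1 else 0)) + 1 := by
      simp [idxL]; ring
    rw [this, decL]
    have h1 : (2 * idxL t + (if b then 1 else 0)) % 2 = (if b then 1 else 0) := by
      cases b <;> simp <;> omega
    have h2 : (2 * idxL t + (if b then 1 else 0)) / 2 = idxL t := by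
      cases b <;> simp <;> omega
    rw [h1, h2, ih]
    cases b <;> simp

lemma idx_bound : ∀ h : List Bool, idxL h + 2 ≤ 2 ^ (h.length + 1) := by
  intro h
  induction h with
  | nil => simp [idxL]
  | cons b t ih =>
    have : 2 ^ (t.length + 1 + 1) = 2 * 2 ^ (t.length + 1) := by ring
    simp only [idxL, List.length_cons, this]
    cases b <;> simp <;> omega

lemma idx_lt {q : ℕ} (h : List Bool) (hl : h.length < q) : idxL h < 2 ^ q - 1 := by
  have h1 := idx_bound h
  have h2 : 2 ^ (h.length + 1) ≤ 2 ^ q := Nat.pow_le_pow_right (by norm_num) hl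
  omega

/-- Simulation of the adaptive run from an array of answers indexed by `idxL`. -/
def simAns (A : ℕ → Bool) : ℕ → List Bool
  | 0 => []
  | k + 1 =>
      let h := simAns A k
      h ++ [A (idxL h)]

lemma answers_length {n s : ℕ} (qf : List Bool → Fin s × Fin n)
    (V : Fin s → Fin n → Bool) : ∀ k, (answers qf V k).length = k := by
  intro k
  induction k with
  | zero => rfl
  | succ k ih => simp [answers, ih]

lemma sim_eq {n s q : ℕ} (qf : List Bool → Fin s × Fin n) (V : Fin s → Fin n → Bool)
    (A : ℕ → Bool)
    (hA : ∀ h : List Bool, h.length < q → A (idxL h) = V (qf h).1 (qf h).2) :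
    ∀ k, k ≤ q → simAns A k = answers qf V k := by
  intro k
  induction k with
  | zero => intro _; rfl
  | succ k ih =>
    intro hk
    have hk' : k ≤ q := Nat.le_of_succ_le hk
    have h1 := ih hk'
    simp only [simAns, answers, h1]
    rw [hA _ (by rw [answers_length]; omega)]

/-- Any property `P` of distributions over `{0,1}^n` that is
`ε`-testable by an adaptive algorithm using `s` samples and `q` queries is also
`ε`-testable by a non-adaptive algorithm using `s` samples and at most `2^q − 1`
queries. -/
theorem stmt_10 {n s q : ℕ} (P : Set ((Fin n → Bool) → ℝ)) (ε : ℝ)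
    (h : ∃ T : AdaptiveTester n s q, EpsTestsA T P ε) :
    ∃ T' : NonAdaptiveTester n s (2 ^ q - 1), EpsTestsN T' P ε := by
  obtain ⟨T, hT⟩ := h
  set T' : NonAdaptiveTester n s (2 ^ q - 1) :=
    { m := T.m
      coin := T.coin
      coin_nonneg := T.coin_nonneg
      coin_sum := T.coin_sum
      query := fun r k => T.query r (decL k.val)
      accept := fun r A =>
        T.accept r (simAns
          (fun j => if hj : j < 2 ^ q - 1 then A ⟨j, hj⟩ else false) q) } with hT'
  have key : ∀ D : (Fin n → Bool) → ℝ, T'.acceptProb D = T.acceptProb D := by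
    intro D
    unfold NonAdaptiveTester.acceptProb AdaptiveTester.acceptProb
    refine Finset.sum_congr rfl fun r _ => ?_
    congr 1
    refine Finset.sum_congr rfl fun V _ => ?_
    congr 2
    simp only [T']
    refine congrArg (fun b => b = true) (congrArg (T.accept r) (sim_eq (T.query r) V _ ?_ q le_rfl))
    intro hist hl
    have hlt := idx_lt hist hl
    simp only [hlt, dif_pos, dec_idx]
  exact ⟨T', fun D hD hP => key D ▸ hT.1 D hD hP, fun D hD hF => key D ▸ hT.2 D hD hF⟩
end

section
/- For any index-invariant property P of distributions over {0,1}^n that is ε-testable by an adaptive algorithm using s samples and q queries, P is ε-testable by a non-adaptive algorithm using s samples and at most s·q ≤ q² queries. -/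
/-- The distribution `D_σ` obtained from `D` by permuting the indices of the vectors
in `{0,1}^n` by `σ`. -/
def permDist {n : ℕ} (σ : Equiv.Perm (Fin n)) (D : (Fin n → Bool) → ℝ) :
    (Fin n → Bool) → ℝ :=
  fun x => D (fun i => x (σ i))

/-- A property of distributions is index-invariant if it is closed under permuting the
indices `[n]`. -/
def IndexInvariant {n : ℕ} (P : Set ((Fin n → Bool) → ℝ)) : Prop :=
  ∀ D, ∀ σ : Equiv.Perm (Fin n), D ∈ P ↔ permDist σ D ∈ P

section Sim
variable {n s : ℕ}

/-- Simulation run: given oracle `B i p` = bit of sample `i` at the `p`-th fresh index,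
run the adaptive query function, tracking (answers, distinct queried indices in order). -/
def simA (qf : List Bool → Fin s × Fin n) (B : Fin s → ℕ → Bool) :
    ℕ → List Bool × List (Fin n)
  | 0 => ([], [])
  | k + 1 =>
      let p := simA qf B k
      let ia := qf p.1
      if ia.2 ∈ p.2 then (p.1 ++ [B ia.1 (p.2.idxOf ia.2)], p.2)
      else (p.1 ++ [B ia.1 p.2.length], p.2 ++ [ia.2])

/-- Real adaptive run with samples `V`, also tracking distinct queried indices. -/
def simB (qf : List Bool → Fin s × Fin n) (V : Fin s → Fin n → Bool) :
    ℕ → List Bool × List (Fin n)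
  | 0 => ([], [])
  | k + 1 =>
      let p := simB qf V k
      let ia := qf p.1
      (p.1 ++ [V ia.1 ia.2], if ia.2 ∈ p.2 then p.2 else p.2 ++ [ia.2])

lemma simB_fst (qf : List Bool → Fin s × Fin n) (V : Fin s → Fin n → Bool) :
    ∀ k, (simB qf V k).1 = answers qf V k
  | 0 => rfl
  | k + 1 => by
      simp only [simB, answers, simB_fst qf V k]

lemma simB_snd_nodup (qf : List Bool → Fin s × Fin n) (V : Fin s → Fin n → Bool) :
    ∀ k, (simB qf V k).2.Nodup
  | 0 => List.nodup_nil
  | k + 1 => by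
      have ih := simB_snd_nodup qf V k
      simp only [simB]
      split
      · exact ih
      · next h => simp [List.nodup_append, ih, h]; rintro a ha rfl; exact h ha

lemma simB_snd_length_le (qf : List Bool → Fin s × Fin n) (V : Fin s → Fin n → Bool)
    (k : ℕ) : (simB qf V k).2.length ≤ n := by
  have := (simB_snd_nodup qf V k).length_le_card
  simpa using this

lemma simB_snd_prefix (qf : List Bool → Fin s × Fin n) (V : Fin s → Fin n → Bool) :
    ∀ {k m : ℕ}, k ≤ m → (simB qf V k).2 <+: (simB qf V m).2 := by
  intro k m h
  induction m with
  | zero => simp_all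
  | succ m ih =>
      rcases Nat.lt_or_ge k (m + 1) with h' | h'
      · refine (ih (Nat.lt_succ_iff.mp h')).trans ?_
        simp only [simB]
        split
        · exact List.prefix_refl _
        · exact List.prefix_append _ _
      · have : k = m + 1 := le_antisymm h h'
        subst this; exact List.prefix_refl _

lemma simA_snd_length_le (qf : List Bool → Fin s × Fin n) (B : Fin s → ℕ → Bool) :
    ∀ k, (simA qf B k).2.length ≤ k
  | 0 => le_refl 0
  | k + 1 => by
      have ih := simA_snd_length_le qf B k
      simp only [simA]
      split
      · exact ih.trans (Nat.le_succ k)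
      · simpa using Nat.succ_le_succ ih

lemma simA_congr (qf : List Bool → Fin s × Fin n) {B B' : Fin s → ℕ → Bool} :
    ∀ k, (∀ i p, p < k → B i p = B' i p) → simA qf B k = simA qf B' k
  | 0, _ => rfl
  | k + 1, h => by
      have ih := simA_congr qf k (fun i p hp => h i p (hp.trans (Nat.lt_succ_self k)))
      have hlen := simA_snd_length_le qf B' k
      simp only [simA, ih]
      split
      · next hm =>
          have : (simA qf B' k).2.idxOf (qf (simA qf B' k).1).2 < (simA qf B' k).2.length :=
            List.idxOf_lt_length_iff.mpr hm
          rw [h _ _ (lt_of_lt_of_le this (hlen.trans (Nat.le_succ k)))]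
      · rw [h _ _ (Nat.lt_succ_of_le hlen)]

end Sim

section Ext
variable {n : ℕ}

lemma exists_extPerm (L : List (Fin n)) (hL : L.Nodup) :
    ∃ e : Equiv.Perm (Fin n), ∀ (j : ℕ) (hj : j < L.length) (hjn : j < n),
      e ⟨j, hjn⟩ = L.get ⟨j, hj⟩ := by
  classical
  set LL := L ++ (List.finRange n).filter (fun x => decide (x ∉ L)) with hLL
  have hnodup : LL.Nodup := by
    refine List.Nodup.append hL ((List.nodup_finRange n).filter _) ?_
    intro a haL haF
    have := List.of_mem_filter haF
    simp at this
    exact this haL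
  have hmem : ∀ x : Fin n, x ∈ LL := by
    intro x
    by_cases hx : x ∈ L
    · exact List.mem_append_left _ hx
    · refine List.mem_append_right _ ?_
      refine List.mem_filter.mpr ⟨List.mem_finRange x, by simpa using hx⟩
  have hlen : LL.length = n := by
    have h1 : LL.toFinset = Finset.univ := by
      apply Finset.eq_univ_iff_forall.mpr
      intro x; simpa using hmem x
    have h2 := List.toFinset_card_of_nodup hnodup
    rw [h1] at h2
    simpa using h2.symm
  have hinj : Function.Injective (fun j : Fin n => LL.get (Fin.cast hlen.symm j)) := by
    intro a b hab
    have := List.nodup_iff_injective_get.mp hnodup hab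
    exact Fin.cast_injective hlen.symm this
  refine ⟨Equiv.ofBijective _ (Finite.injective_iff_bijective.mp hinj), ?_⟩
  intro j hj hjn
  show LL.get (Fin.cast hlen.symm ⟨j, hjn⟩) = L.get ⟨j, hj⟩
  have : j < LL.length := by omega
  simp only [List.get_eq_getElem]
  exact List.getElem_append_left hj

/-- A permutation extending the map `j ↦ L[j]` (canonical choice). -/
noncomputable def extPerm (L : List (Fin n)) : Equiv.Perm (Fin n) :=
  if h : ∃ e : Equiv.Perm (Fin n), ∀ (j : ℕ) (hj : j < L.length) (hjn : j < n),
      e ⟨j, hjn⟩ = L.get ⟨j, hj⟩ then h.choose else 1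

lemma extPerm_spec {L : List (Fin n)} (hL : L.Nodup) (j : ℕ) (hj : j < L.length)
    (hjn : j < n) : extPerm L ⟨j, hjn⟩ = L.get ⟨j, hj⟩ := by
  have h := exists_extPerm L hL
  rw [extPerm, dif_pos h]
  exact h.choose_spec j hj hjn

end Ext

section Coupling
variable {n s : ℕ}

/-- Coupling: if `σ` sends fresh index `j` to `π (L[j])` where `L` is the list of
distinct indices of the real run with index-relabeling `π`, then the simulated run
(reading bits at fresh positions through `σ`) coincides with the real run. -/
lemma sim_coupling (hn : 0 < n) (qf : List Bool → Fin s × Fin n)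
    (W : Fin s → Fin n → Bool) (π σ : Equiv.Perm (Fin n)) (q : ℕ)
    (hσ : ∀ (j : ℕ) (hj : j < ((simB qf (fun i a => W i (π a)) q).2).length) (hjn : j < n),
      σ ⟨j, hjn⟩ = π (((simB qf (fun i a => W i (π a)) q).2).get ⟨j, hj⟩)) :
    ∀ k, k ≤ q →
      simA qf (fun i p => W i (σ ⟨p % n, Nat.mod_lt p hn⟩)) k
        = simB qf (fun i a => W i (π a)) k := by
  intro k hk
  induction k with
  | zero => rfl
  | succ k ih =>
      have ih' := ih (Nat.le_of_succ_le hk)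
      simp only [simA, simB, ih']
      by_cases hm : (qf (simB qf (fun i a => W i (π a)) k).1).2
          ∈ (simB qf (fun i a => W i (π a)) k).2
      · have hidx := List.idxOf_lt_length_iff.mpr hm
        have hpre : (simB qf (fun i a => W i (π a)) k).2
            <+: (simB qf (fun i a => W i (π a)) q).2 :=
          simB_snd_prefix qf _ (Nat.le_of_succ_le hk)
        have hidxL := lt_of_lt_of_le hidx hpre.length_le
        have hidxn : List.idxOf (qf (simB qf (fun i a => W i (π a)) k).1).2
            (simB qf (fun i a => W i (π a)) k).2 < n :=
          lt_of_lt_of_le hidxL (by simpa using (simB_snd_nodup qf (fun i a => W i (π a)) q).length_le_card)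
        rw [if_pos hm, if_pos hm]
        have h1 : (⟨List.idxOf (qf (simB qf (fun i a => W i (π a)) k).1).2
              (simB qf (fun i a => W i (π a)) k).2 % n, Nat.mod_lt _ hn⟩ : Fin n)
            = ⟨_, hidxn⟩ := Fin.ext (Nat.mod_eq_of_lt hidxn)
        rw [h1, hσ _ hidxL hidxn]
        have h2 : ((simB qf (fun i a => W i (π a)) q).2).get ⟨_, hidxL⟩
            = (qf (simB qf (fun i a => W i (π a)) k).1).2 := by
          simp only [List.get_eq_getElem]
          rw [← hpre.getElem hidx]
          exact List.getElem_idxOf hidx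
        rw [h2]
      · have hgrow : (simB qf (fun i a => W i (π a)) (k+1)).2
            = (simB qf (fun i a => W i (π a)) k).2
              ++ [(qf (simB qf (fun i a => W i (π a)) k).1).2] := by
          simp only [simB, if_neg hm]
        have hpre2 : (simB qf (fun i a => W i (π a)) k).2
              ++ [(qf (simB qf (fun i a => W i (π a)) k).1).2]
            <+: (simB qf (fun i a => W i (π a)) q).2 := by
          rw [← hgrow]; exact simB_snd_prefix qf _ hk
        have hlt : (simB qf (fun i a => W i (π a)) k).2.length
            < ((simB qf (fun i a => W i (π a)) k).2
              ++ [(qf (simB qf (fun i a => W i (π a)) k).1).2]).length := by simp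
        have hlenL := lt_of_lt_of_le hlt hpre2.length_le
        have hlenn : (simB qf (fun i a => W i (π a)) k).2.length < n :=
          lt_of_lt_of_le hlenL (by simpa using (simB_snd_nodup qf (fun i a => W i (π a)) q).length_le_card)
        rw [if_neg hm, if_neg hm]
        have h1 : (⟨(simB qf (fun i a => W i (π a)) k).2.length % n, Nat.mod_lt _ hn⟩ : Fin n)
            = ⟨_, hlenn⟩ := Fin.ext (Nat.mod_eq_of_lt hlenn)
        rw [h1, hσ _ hlenL hlenn]
        have h2 : ((simB qf (fun i a => W i (π a)) q).2).get ⟨_, hlenL⟩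
            = (qf (simB qf (fun i a => W i (π a)) k).1).2 := by
          simp only [List.get_eq_getElem]
          rw [← hpre2.getElem hlt]
          simp
        rw [h2]

end Coupling

section Key
variable {n s : ℕ}

/-- The bijection on permutations underlying the simulation argument. -/
noncomputable def psiMap (qf : List Bool → Fin s × Fin n) (W : Fin s → Fin n → Bool)
    (q : ℕ) (π : Equiv.Perm (Fin n)) : Equiv.Perm (Fin n) :=
  π * extPerm (simB qf (fun i a => W i (π a)) q).2

lemma psiMap_coupling (hn : 0 < n) (qf : List Bool → Fin s × Fin n)
    (W : Fin s → Fin n → Bool) (q : ℕ) (π : Equiv.Perm (Fin n)) :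
    simA qf (fun i p => W i (psiMap qf W q π ⟨p % n, Nat.mod_lt p hn⟩)) q
      = simB qf (fun i a => W i (π a)) q := by
  refine sim_coupling hn qf W π _ q (fun j hj hjn => ?_) q le_rfl
  show (π * extPerm (simB qf (fun i a => W i (π a)) q).2) ⟨j, hjn⟩ = _
  rw [Equiv.Perm.mul_apply, extPerm_spec (simB_snd_nodup qf _ q) j hj hjn]

lemma psiMap_inj (hn : 0 < n) (qf : List Bool → Fin s × Fin n)
    (W : Fin s → Fin n → Bool) (q : ℕ) : Function.Injective (psiMap qf W q) := by
  intro π₁ π₂ h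
  have c₁ := psiMap_coupling hn qf W q π₁
  have c₂ := psiMap_coupling hn qf W q π₂
  rw [h] at c₁
  have hL : (simB qf (fun i a => W i (π₁ a)) q).2 = (simB qf (fun i a => W i (π₂ a)) q).2 :=
    congrArg Prod.snd (c₁.symm.trans c₂)
  have h' := h
  unfold psiMap at h'
  rw [hL] at h'
  exact mul_right_cancel h'

lemma key_sum (hn : 0 < n) (qf : List Bool → Fin s × Fin n) (W : Fin s → Fin n → Bool)
    (q : ℕ) (F : List Bool → ℝ) :
    ∑ σ : Equiv.Perm (Fin n), F ((simA qf (fun i p => W i (σ ⟨p % n, Nat.mod_lt p hn⟩)) q).1)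
      = ∑ π : Equiv.Perm (Fin n), F (answers qf (fun i a => W i (π a)) q) := by
  have hbij := Finite.injective_iff_bijective.mp (psiMap_inj hn qf W q)
  rw [← hbij.sum_comp
    (fun σ => F ((simA qf (fun i p => W i (σ ⟨p % n, Nat.mod_lt p hn⟩)) q).1))]
  refine Finset.sum_congr rfl fun π _ => ?_
  rw [psiMap_coupling hn qf W q π, simB_fst]

end Key

section PermEmd
variable {n : ℕ}

/-- Permuting coordinates as an equivalence of the cube. -/
def cubeE (τ : Equiv.Perm (Fin n)) : (Fin n → Bool) ≃ (Fin n → Bool) where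
  toFun x := fun i => x (τ i)
  invFun x := fun i => x (τ⁻¹ i)
  left_inv x := by funext i; simp
  right_inv x := by funext i; simp

lemma nHam_perm (τ : Equiv.Perm (Fin n)) (x y : Fin n → Bool) :
    nHam (cubeE τ x) (cubeE τ y) = nHam x y := by
  unfold nHam
  congr 1
  have : hammingDist (cubeE τ x) (cubeE τ y) = hammingDist x y := by
    simp only [hammingDist, Finset.card_filter, cubeE, Equiv.coe_fn_mk]
    exact (Finset.card_filter _ _).trans (by convert Equiv.sum_comp τ (fun i => if x i ≠ y i then 1 else 0) using 2; split_ifs <;> simp_all)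
  rw [this]

lemma permDist_comp (σ τ : Equiv.Perm (Fin n)) (D : (Fin n → Bool) → ℝ) :
    permDist σ (permDist τ D) = permDist (σ * τ) D := rfl

lemma permDist_one (D : (Fin n → Bool) → ℝ) : permDist 1 D = D := rfl

lemma isDist_perm (σ : Equiv.Perm (Fin n)) {D : (Fin n → Bool) → ℝ} (hD : IsDist D) :
    IsDist (permDist σ D) := by
  refine ⟨fun x => hD.1 _, ?_⟩
  have h : ∑ x, permDist σ D x = ∑ x, D (cubeE σ x) := rfl
  rw [h, Equiv.sum_comp (cubeE σ) D]
  exact hD.2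

lemma isFlow_perm (τ : Equiv.Perm (Fin n)) {E₁ E₂ : (Fin n → Bool) → ℝ}
    {f : (Fin n → Bool) → (Fin n → Bool) → ℝ} (hf : IsFlow E₁ E₂ f) :
    IsFlow (permDist τ E₁) (permDist τ E₂) (fun x y => f (cubeE τ x) (cubeE τ y)) := by
  obtain ⟨h0, h1, h2⟩ := hf
  refine ⟨fun x y => h0 _ _, fun x => ?_, fun y => ?_⟩
  · rw [Equiv.sum_comp (cubeE τ) (f (cubeE τ x))]
    exact h1 _
  · rw [Equiv.sum_comp (cubeE τ) (fun x => f x (cubeE τ y))]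
    exact h2 _

lemma cost_perm (τ : Equiv.Perm (Fin n)) (f : (Fin n → Bool) → (Fin n → Bool) → ℝ) :
    ∑ x, ∑ y, f (cubeE τ x) (cubeE τ y) * nHam x y = ∑ x, ∑ y, f x y * nHam x y := by
  have h1 : ∑ x, ∑ y, f (cubeE τ x) (cubeE τ y) * nHam x y
      = ∑ x, ∑ y, f (cubeE τ x) (cubeE τ y) * nHam (cubeE τ x) (cubeE τ y) := by
    refine Finset.sum_congr rfl fun x _ => Finset.sum_congr rfl fun y _ => ?_
    rw [nHam_perm]
  rw [h1]
  rw [Equiv.sum_comp (cubeE τ) (fun u => ∑ y, f u (cubeE τ y) * nHam u (cubeE τ y))]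
  refine Finset.sum_congr rfl fun x _ => ?_
  rw [Equiv.sum_comp (cubeE τ) (fun v => f x v * nHam x v)]

lemma emd_perm (τ : Equiv.Perm (Fin n)) (D₁ D₂ : (Fin n → Bool) → ℝ) :
    emd (permDist τ D₁) (permDist τ D₂) = emd D₁ D₂ := by
  unfold emd
  congr 1
  ext c
  constructor
  · rintro ⟨f, hf, hc⟩
    refine ⟨fun x y => f (cubeE τ⁻¹ x) (cubeE τ⁻¹ y), ?_, ?_⟩
    · have := isFlow_perm τ⁻¹ hf
      rw [permDist_comp, permDist_comp, inv_mul_cancel, permDist_one, permDist_one] at this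
      exact this
    · rw [cost_perm τ⁻¹ f]; exact hc
  · rintro ⟨f, hf, hc⟩
    exact ⟨fun x y => f (cubeE τ x) (cubeE τ y), isFlow_perm τ hf, by rw [cost_perm τ f]; exact hc⟩

lemma farFrom_perm {P : Set ((Fin n → Bool) → ℝ)} (hinv : IndexInvariant P)
    (σ : Equiv.Perm (Fin n)) {D : (Fin n → Bool) → ℝ} (ε : ℝ)
    (hD : FarFrom ε P D) : FarFrom ε P (permDist σ D) := by
  intro D' hD'
  have hmem : permDist σ⁻¹ D' ∈ P := (hinv D' σ⁻¹).mp hD'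
  have := hD _ hmem
  have he : emd (permDist σ D) D' = emd D (permDist σ⁻¹ D') := by
    conv_lhs => rw [show D' = permDist σ (permDist σ⁻¹ D') by
      rw [permDist_comp, mul_inv_cancel, permDist_one]]
    rw [emd_perm]
  rw [he]
  exact this

end PermEmd

section Main
variable {n s q : ℕ}

/-- The non-adaptive tester: pick coins of `T` and a uniformly random permutation `σ`;
query every sample at the indices `σ 0, σ 1, …`; simulate `T`, feeding it the bit of
the requested sample at the fresh position of the requested index. -/
noncomputable def naTester (hn : 0 < n) (T : AdaptiveTester n s q) :
    NonAdaptiveTester n s (s * q) where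
  m := Fintype.card (Fin T.m × Equiv.Perm (Fin n))
  coin r' := T.coin ((Fintype.equivFin (Fin T.m × Equiv.Perm (Fin n))).symm r').1
      / (Fintype.card (Equiv.Perm (Fin n)) : ℝ)
  coin_nonneg r' := div_nonneg (T.coin_nonneg _) (Nat.cast_nonneg _)
  coin_sum := by
    rw [← Equiv.sum_comp (Fintype.equivFin (Fin T.m × Equiv.Perm (Fin n)))
      (fun r' => T.coin ((Fintype.equivFin (Fin T.m × Equiv.Perm (Fin n))).symm r').1
        / (Fintype.card (Equiv.Perm (Fin n)) : ℝ))]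
    simp only [Equiv.symm_apply_apply]
    rw [Fintype.sum_prod_type]
    have hN : ((Fintype.card (Equiv.Perm (Fin n)) : ℝ)) ≠ 0 := by
      exact_mod_cast Fintype.card_ne_zero
    have : ∀ r : Fin T.m, ∑ _σ : Equiv.Perm (Fin n),
        T.coin r / (Fintype.card (Equiv.Perm (Fin n)) : ℝ) = T.coin r := by
      intro r
      rw [Finset.sum_const, Finset.card_univ, nsmul_eq_mul]
      field_simp
    simp only [this]
    exact T.coin_sum
  query r' k := ((finProdFinEquiv.symm k).1,
      ((Fintype.equivFin (Fin T.m × Equiv.Perm (Fin n))).symm r').2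
        ⟨((finProdFinEquiv.symm k).2 : ℕ) % n, Nat.mod_lt _ hn⟩)
  accept r' A := T.accept ((Fintype.equivFin (Fin T.m × Equiv.Perm (Fin n))).symm r').1
      (simA (T.query ((Fintype.equivFin (Fin T.m × Equiv.Perm (Fin n))).symm r').1)
        (fun i p => if h : p < q then A (finProdFinEquiv (i, (⟨p, h⟩ : Fin q))) else false) q).1

lemma naTester_acceptProb (hn : 0 < n) (T : AdaptiveTester n s q)
    (D : (Fin n → Bool) → ℝ) :
    (naTester hn T).acceptProb D
      = (Fintype.card (Equiv.Perm (Fin n)) : ℝ)⁻¹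
        * ∑ σ : Equiv.Perm (Fin n), T.acceptProb (permDist σ D) := by
  classical
  -- the common core
  set CORE : Fin T.m → Equiv.Perm (Fin n) → ℝ := fun r π =>
    ∑ W : Fin s → Fin n → Bool, (∏ i, D (W i)) *
      (if T.accept r (answers (T.query r) (fun i a => W i (π a)) q) then 1 else 0) with hCORE
  -- Right-hand side in normal form
  have hR : ∑ σ : Equiv.Perm (Fin n), T.acceptProb (permDist σ D)
      = ∑ π : Equiv.Perm (Fin n), ∑ r, T.coin r * CORE r π := by
    have hstep : ∀ σ' : Equiv.Perm (Fin n), T.acceptProb (permDist σ' D)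
        = ∑ r, T.coin r * CORE r σ'⁻¹ := by
      intro σ'
      unfold AdaptiveTester.acceptProb
      refine Finset.sum_congr rfl fun r _ => ?_
      congr 1
      have hbij : Function.Bijective
          (fun (W : Fin s → Fin n → Bool) => (fun i a => W i (σ'⁻¹ a) : Fin s → Fin n → Bool)) := by
        rw [Function.bijective_iff_has_inverse]
        refine ⟨fun V i a => V i (σ' a), ?_, ?_⟩
        · intro W; funext i a; simp
        · intro V; funext i a; simp
      rw [hCORE]
      rw [← hbij.sum_comp (fun V => (∏ i, permDist σ' D (V i)) *
          (if T.accept r (answers (T.query r) V q) then (1:ℝ) else 0))]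
      refine Finset.sum_congr rfl fun W _ => ?_
      have hprod : ∀ i, permDist σ' D (fun a => W i (σ'⁻¹ a)) = D (W i) := fun i => by
        show D (fun j => W i (σ'⁻¹ (σ' j))) = D (W i)
        congr 1; funext j; simp
      simp only [hprod]
    simp only [hstep]
    have hib : Function.Bijective (fun σ : Equiv.Perm (Fin n) => σ⁻¹) :=
      ⟨fun a b hab => by simpa using congrArg Inv.inv hab, fun a => ⟨a⁻¹, inv_inv a⟩⟩
    rw [← hib.sum_comp (fun π => ∑ r, T.coin r * CORE r π)]
  -- Left-hand side in normal form
  have hL : (naTester hn T).acceptProb D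
      = ∑ r, ∑ σ : Equiv.Perm (Fin n),
          (T.coin r / (Fintype.card (Equiv.Perm (Fin n)) : ℝ)) *
          ∑ V : Fin s → Fin n → Bool, (∏ i, D (V i)) *
            (if T.accept r ((simA (T.query r)
                (fun i p => V i (σ ⟨p % n, Nat.mod_lt p hn⟩)) q).1) then 1 else 0) := by
    set e := Fintype.equivFin (Fin T.m × Equiv.Perm (Fin n)) with he
    set F : Fin (Fintype.card (Fin T.m × Equiv.Perm (Fin n))) → ℝ := fun r' =>
        (naTester hn T).coin r' * ∑ V : Fin s → Fin n → Bool,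
        (∏ i, D (V i)) *
        (if (naTester hn T).accept r'
            (fun k => V ((naTester hn T).query r' k).1 ((naTester hn T).query r' k).2)
          then 1 else 0)
      with hF
    have h0 : (naTester hn T).acceptProb D = ∑ r', F r' := rfl
    rw [h0, ← Equiv.sum_comp e F, Fintype.sum_prod_type]
    refine Finset.sum_congr rfl fun r _ => Finset.sum_congr rfl fun σ _ => ?_
    have hcoin : (naTester hn T).coin (e (r, σ)) = T.coin r / (Fintype.card (Equiv.Perm (Fin n)) : ℝ) := by
      simp [naTester, he]
    have hacc : ∀ V : Fin s → Fin n → Bool,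
        (naTester hn T).accept (e (r, σ)) (fun k => V ((naTester hn T).query (e (r, σ)) k).1 ((naTester hn T).query (e (r, σ)) k).2)
          = T.accept r ((simA (T.query r)
              (fun i p => V i (σ ⟨p % n, Nat.mod_lt p hn⟩)) q).1) := by
      intro V
      show T.accept ((e.symm (e (r, σ))).1)
          (simA (T.query ((e.symm (e (r, σ))).1))
            (fun i p => if h : p < q then
              V ((naTester hn T).query (e (r, σ)) (finProdFinEquiv (i, (⟨p, h⟩ : Fin q)))).1
                ((naTester hn T).query (e (r, σ)) (finProdFinEquiv (i, (⟨p, h⟩ : Fin q)))).2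
              else false) q).1 = _
      rw [Equiv.symm_apply_apply]
      congr 1
      refine congrArg Prod.fst (simA_congr (T.query r) q ?_)
      intro i p hp
      rw [dif_pos hp]
      show V ((finProdFinEquiv.symm (finProdFinEquiv (i, (⟨p, hp⟩ : Fin q)))).1)
          (((e.symm (e (r, σ))).2)
            ⟨(((finProdFinEquiv.symm (finProdFinEquiv (i, (⟨p, hp⟩ : Fin q)))).2 : Fin q) : ℕ) % n,
              Nat.mod_lt _ hn⟩) = V i (σ ⟨p % n, Nat.mod_lt p hn⟩)
      simp
    simp only [hF, hcoin, hacc]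
  -- use the key bijection
  have hK : ∀ r, ∑ σ : Equiv.Perm (Fin n),
      ∑ V : Fin s → Fin n → Bool, (∏ i, D (V i)) *
        (if T.accept r ((simA (T.query r)
            (fun i p => V i (σ ⟨p % n, Nat.mod_lt p hn⟩)) q).1) then 1 else 0)
      = ∑ π : Equiv.Perm (Fin n), CORE r π := by
    intro r
    rw [Finset.sum_comm]
    have : ∀ V : Fin s → Fin n → Bool, ∑ σ : Equiv.Perm (Fin n),
        (∏ i, D (V i)) *
          (if T.accept r ((simA (T.query r)
              (fun i p => V i (σ ⟨p % n, Nat.mod_lt p hn⟩)) q).1) then 1 else 0)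
        = ∑ π : Equiv.Perm (Fin n), (∏ i, D (V i)) *
          (if T.accept r (answers (T.query r) (fun i a => V i (π a)) q) then 1 else 0) := by
      intro V
      rw [← Finset.mul_sum, ← Finset.mul_sum]
      congr 1
      exact key_sum hn (T.query r) V q
        (fun hist => if T.accept r hist then (1 : ℝ) else 0)
    simp only [this]
    rw [Finset.sum_comm]
  rw [hL, hR]
  have expand : ∀ r, ∑ σ : Equiv.Perm (Fin n),
      (T.coin r / (Fintype.card (Equiv.Perm (Fin n)) : ℝ)) *
      ∑ V : Fin s → Fin n → Bool, (∏ i, D (V i)) *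
        (if T.accept r ((simA (T.query r)
            (fun i p => V i (σ ⟨p % n, Nat.mod_lt p hn⟩)) q).1) then 1 else 0)
      = (T.coin r / (Fintype.card (Equiv.Perm (Fin n)) : ℝ)) *
        ∑ π : Equiv.Perm (Fin n), CORE r π := by
    intro r
    rw [← Finset.mul_sum, hK r]
  simp only [expand]
  simp only [Finset.mul_sum]
  rw [Finset.sum_comm]
  refine Finset.sum_congr rfl fun π _ => Finset.sum_congr rfl fun r _ => ?_
  rw [div_eq_mul_inv]
  ring

end Main

/-- For any index-invariant property `P` of distributions over
`{0,1}^n` that is `ε`-testable by an adaptive algorithm using `s` samples and `q`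
queries, `P` is `ε`-testable by a non-adaptive algorithm using `s` samples and at most
`s·q` (≤ `q²`) queries. -/
theorem stmt_11 {n s q : ℕ} (P : Set ((Fin n → Bool) → ℝ)) (ε : ℝ)
    (hinv : IndexInvariant P)
    (h : ∃ T : AdaptiveTester n s q, EpsTestsA T P ε) :
    ∃ T' : NonAdaptiveTester n s (s * q), EpsTestsN T' P ε := by
  classical
  obtain ⟨T, hT⟩ := h
  have hne : Nonempty (Fin T.m) := by
    by_contra h'
    have hie : IsEmpty (Fin T.m) := not_nonempty_iff.mp h'
    have hc := T.coin_sum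
    rw [Finset.univ_eq_empty, Finset.sum_empty] at hc
    exact one_ne_zero hc.symm
  obtain ⟨r0⟩ := hne
  have hn : 0 < n := (T.query r0 []).2.pos
  have hNpos : 0 < ((Fintype.card (Equiv.Perm (Fin n))) : ℝ) := by
    exact_mod_cast Fintype.card_pos
  refine ⟨naTester hn T, ?_, ?_⟩
  · intro D hD hDP
    rw [naTester_acceptProb]
    have hterm : ∀ σ : Equiv.Perm (Fin n), 2/3 ≤ T.acceptProb (permDist σ D) := fun σ =>
      hT.1 _ (isDist_perm σ hD) ((hinv D σ).mp hDP)
    have hsum : ((Fintype.card (Equiv.Perm (Fin n))) : ℝ) * (2/3)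
        ≤ ∑ σ : Equiv.Perm (Fin n), T.acceptProb (permDist σ D) := by
      calc ((Fintype.card (Equiv.Perm (Fin n))) : ℝ) * (2/3)
          = ∑ _σ : Equiv.Perm (Fin n), (2/3 : ℝ) := by
            rw [Finset.sum_const, Finset.card_univ, nsmul_eq_mul]
        _ ≤ _ := Finset.sum_le_sum (fun σ _ => hterm σ)
    calc (2:ℝ)/3
        = ((Fintype.card (Equiv.Perm (Fin n))) : ℝ)⁻¹
            * (((Fintype.card (Equiv.Perm (Fin n))) : ℝ) * (2/3)) := by
          field_simp
      _ ≤ _ := mul_le_mul_of_nonneg_left hsum (inv_nonneg.mpr hNpos.le)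
  · intro D hD hDF
    rw [naTester_acceptProb]
    have hterm : ∀ σ : Equiv.Perm (Fin n), T.acceptProb (permDist σ D) ≤ 1/3 := fun σ =>
      hT.2 _ (isDist_perm σ hD) (farFrom_perm hinv σ ε hDF)
    have hsum : ∑ σ : Equiv.Perm (Fin n), T.acceptProb (permDist σ D)
        ≤ ((Fintype.card (Equiv.Perm (Fin n))) : ℝ) * (1/3) := by
      calc ∑ σ : Equiv.Perm (Fin n), T.acceptProb (permDist σ D)
          ≤ ∑ _σ : Equiv.Perm (Fin n), (1/3 : ℝ) :=
            Finset.sum_le_sum (fun σ _ => hterm σ)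
        _ = ((Fintype.card (Equiv.Perm (Fin n))) : ℝ) * (1/3) := by
            rw [Finset.sum_const, Finset.card_univ, nsmul_eq_mul]
    calc ((Fintype.card (Equiv.Perm (Fin n))) : ℝ)⁻¹
          * ∑ σ : Equiv.Perm (Fin n), T.acceptProb (permDist σ D)
        ≤ ((Fintype.card (Equiv.Perm (Fin n))) : ℝ)⁻¹
            * (((Fintype.card (Equiv.Perm (Fin n))) : ℝ) * (1/3)) :=
          mul_le_mul_of_nonneg_left hsum (inv_nonneg.mpr hNpos.le)
      _ = 1/3 := by field_simp
end

section
/- Let A be a k × ℓ binary matrix whose columns are pairwise at normalized Hamming distance at least 1/3, let ℓ' divide n, and let L be the k × n matrix obtained by blowing up each entry of A to n/ℓ copies along the rows (so L has ℓ equivalence classes of identical columns each of size n/ℓ). Let M be any k × n binary matrix whose columns take at most ℓ' distinct values, where ℓ' ≤ ℓ/2^{10}. Then for every permutation π of the rows, the normalized Hamming distance between L^π and M is at least 1/8. -/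
private lemma filter_perm_card {k : ℕ} (σ : Equiv.Perm (Fin k)) (p : Fin k → Prop)
    [DecidablePred p] :
    (Finset.univ.filter fun i => p (σ i)).card = (Finset.univ.filter p).card := by
  apply Finset.card_bij (fun i _ => σ i)
  · intro a ha; simp only [Finset.mem_filter, Finset.mem_univ, true_and] at ha ⊢; exact ha
  · intro a _ b _ h; exact σ.injective h
  · intro b hb
    refine ⟨σ.symm b, ?_, by simp⟩
    simp only [Finset.mem_filter, Finset.mem_univ, true_and, Equiv.apply_symm_apply] at hb ⊢
    exact hb

/-- Let `A` be a `k × ℓ` binary matrix whose columns are pairwise at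
normalized Hamming distance at least `1/3`, let `ℓ` and `ℓ'` divide `n`, and let `L` be
the `k × n` blow-up of `A` along a map `φ : [n] → [ℓ]` all of whose fibers have size
`n/ℓ`. Let `M` be any `k × n` binary matrix whose columns take at most `ℓ'` distinct
values, where `2^10 · ℓ' ≤ ℓ`. Then for every permutation `π` of the rows, the normalized
Hamming distance between `L^π` and `M` is at least `1/8`. -/
theorem stmt_12 (k n ℓ ℓ' : ℕ) (hk : 0 < k) (hn : 0 < n) (hℓ : 0 < ℓ)
    (hdvd : ℓ ∣ n) (hdvd' : ℓ' ∣ n)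
    (A : Fin k → Fin ℓ → Bool)
    (hA : ∀ c c' : Fin ℓ, c ≠ c' →
      (1 : ℝ) / 3 ≤ (hammingDist (fun i => A i c) (fun i => A i c') : ℝ) / k)
    (φ : Fin n → Fin ℓ)
    (hφ : ∀ c : Fin ℓ, (Finset.univ.filter (fun j => φ j = c)).card = n / ℓ)
    (L : Fin k → Fin n → Bool) (hL : ∀ i j, L i j = A i (φ j))
    (M : Fin k → Fin n → Bool)
    (hM : ((Finset.univ : Finset (Fin n)).image (fun j => fun i => M i j)).card ≤ ℓ')
    (hℓ' : 2 ^ 10 * ℓ' ≤ ℓ) :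
    ∀ π : Equiv.Perm (Fin k), (1 : ℝ) / 8 ≤ matDist (fun i => L (π i)) M := by
  intro π
  classical
  set colL : Fin n → Fin k → Bool := fun j i => A (π i) (φ j) with hcolL
  set colM : Fin n → Fin k → Bool := fun j i => M i j with hcolM
  -- permuted columns of A remain far apart (in ℕ)
  have hAB : ∀ c c' : Fin ℓ, c ≠ c' →
      k ≤ 3 * hammingDist (fun i => A (π i) c) (fun i => A (π i) c') := by
    intro c c' hcc
    have hperm : hammingDist (fun i => A (π i) c) (fun i => A (π i) c')
        = hammingDist (fun i => A i c) (fun i => A i c') := by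
      simp only [hammingDist]
      exact filter_perm_card π (fun i => A i c ≠ A i c')
    have h := hA c c' hcc
    rw [div_le_div_iff₀ (by norm_num) (by exact_mod_cast hk)] at h
    have : (k : ℝ) ≤ 3 * (hammingDist (fun i => A i c) (fun i => A i c') : ℝ) := by
      linarith
    rw [hperm]
    exact_mod_cast this
  -- swap sums: row-wise mismatch count equals column-wise mismatch count
  have hswap : ∑ i, hammingDist (L (π i)) (M i) = ∑ j, hammingDist (colL j) (colM j) := by
    simp only [hammingDist, Finset.card_filter]
    rw [Finset.sum_comm]
    refine Finset.sum_congr rfl fun j _ => Finset.sum_congr rfl fun i _ => ?_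
    simp [hL, hcolL, hcolM]
  -- the set of close columns
  set S : Finset (Fin n) :=
    Finset.univ.filter (fun j => 6 * hammingDist (colL j) (colM j) < k) with hS
  -- close columns with equal M-column have equal φ-value
  have hkey : ∀ j ∈ S, ∀ j' ∈ S, colM j = colM j' → φ j = φ j' := by
    intro j hj j' hj' hMM
    by_contra hne
    have h1 : 6 * hammingDist (colL j) (colM j) < k := (Finset.mem_filter.mp hj).2
    have h2 : 6 * hammingDist (colL j') (colM j') < k := (Finset.mem_filter.mp hj').2
    have htri : hammingDist (colL j) (colL j')
        ≤ hammingDist (colL j) (colM j) + hammingDist (colM j') (colL j') := by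
      rw [hMM] at *
      exact hammingDist_triangle _ _ _
    rw [hammingDist_comm (colM j')] at htri
    have hfar := hAB (φ j) (φ j') hne
    have : hammingDist (fun i => A (π i) (φ j)) (fun i => A (π i) (φ j'))
        = hammingDist (colL j) (colL j') := rfl
    rw [this] at hfar
    omega
  -- bound the size of S
  have hScard : S.card ≤ ℓ' * (n / ℓ) := by
    rw [Finset.card_eq_sum_card_image colM S]
    calc ∑ v ∈ S.image colM, (S.filter fun j => colM j = v).card
        ≤ ∑ _v ∈ S.image colM, n / ℓ := by
          refine Finset.sum_le_sum fun v hv => ?_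
          obtain ⟨j₀, hj₀S, hj₀v⟩ := Finset.mem_image.mp hv
          have hsub : (S.filter fun j => colM j = v) ⊆
              Finset.univ.filter (fun j => φ j = φ j₀) := by
            intro j hj
            have hjS := (Finset.mem_filter.mp hj).1
            have hjv := (Finset.mem_filter.mp hj).2
            simp only [Finset.mem_filter, Finset.mem_univ, true_and]
            exact hkey j hjS j₀ hj₀S (hjv.trans hj₀v.symm)
          calc (S.filter fun j => colM j = v).card
              ≤ (Finset.univ.filter (fun j => φ j = φ j₀)).card := Finset.card_le_card hsub
            _ = n / ℓ := hφ (φ j₀)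
      _ = (S.image colM).card * (n / ℓ) := by rw [Finset.sum_const, smul_eq_mul]
      _ ≤ ℓ' * (n / ℓ) := by
          refine Nat.mul_le_mul_right _ ?_
          exact le_trans (Finset.card_le_card (Finset.image_subset_image (Finset.subset_univ S))) hM
  -- real-valued bound on S
  have hnl : ((n / ℓ : ℕ) : ℝ) = (n : ℝ) / ℓ := by
    rw [Nat.cast_div hdvd (by exact_mod_cast hℓ.ne')]
  have hScardR : (S.card : ℝ) ≤ (n : ℝ) / 2 ^ 10 := by
    have h1 : (S.card : ℝ) ≤ (ℓ' : ℝ) * ((n : ℝ) / ℓ) := by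
      rw [← hnl]; exact_mod_cast hScard
    have h2 : (2 : ℝ) ^ 10 * ℓ' ≤ (ℓ : ℝ) := by exact_mod_cast hℓ'
    have hℓR : (0 : ℝ) < ℓ := by exact_mod_cast hℓ
    have hnR : (0 : ℝ) ≤ n := by positivity
    refine h1.trans ?_
    have heq : (ℓ' : ℝ) * ((n : ℝ) / ℓ) = (ℓ' : ℝ) * n / ℓ := by ring
    rw [heq, div_le_div_iff₀ hℓR (by norm_num)]
    nlinarith [Nat.cast_nonneg (α := ℝ) ℓ']
  -- lower bound on the total mismatch count
  have hSc : ((Sᶜ).card : ℝ) = (n : ℝ) - S.card := by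
    rw [Finset.card_compl]
    have := Finset.card_le_univ S
    simp only [Fintype.card_fin]
    push_cast [Nat.cast_sub (by simpa using this)]
    ring
  have hlow : ∀ j ∈ Sᶜ, (k : ℝ) / 6 ≤ (hammingDist (colL j) (colM j) : ℝ) := by
    intro j hj
    have : ¬ (6 * hammingDist (colL j) (colM j) < k) := by
      intro h
      exact (Finset.mem_compl.mp hj) (Finset.mem_filter.mpr ⟨Finset.mem_univ j, h⟩)
    have h6 : k ≤ 6 * hammingDist (colL j) (colM j) := not_lt.mp this
    have : (k : ℝ) ≤ 6 * (hammingDist (colL j) (colM j) : ℝ) := by exact_mod_cast h6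
    linarith
  have hsumlow : ((Sᶜ).card : ℝ) * ((k : ℝ) / 6)
      ≤ ∑ j, (hammingDist (colL j) (colM j) : ℝ) := by
    calc ((Sᶜ).card : ℝ) * ((k : ℝ) / 6)
        ≤ ∑ j ∈ Sᶜ, (hammingDist (colL j) (colM j) : ℝ) := by
          rw [← nsmul_eq_mul]
          exact Finset.card_nsmul_le_sum _ _ _ hlow
      _ ≤ ∑ j, (hammingDist (colL j) (colM j) : ℝ) :=
          Finset.sum_le_sum_of_subset_of_nonneg (Finset.subset_univ _)
            (fun j _ _ => by positivity)
  -- conclude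
  have hkR : (0 : ℝ) < k := by exact_mod_cast hk
  have hnRpos : (0 : ℝ) < n := by exact_mod_cast hn
  have hT : (∑ i, (hammingDist (L (π i)) (M i) : ℝ))
      = ∑ j, (hammingDist (colL j) (colM j) : ℝ) := by
    exact_mod_cast congrArg (Nat.cast (R := ℝ)) hswap
  show (1 : ℝ) / 8 ≤ (∑ i, (hammingDist (L (π i)) (M i) : ℝ)) / (k * n)
  rw [hT, le_div_iff₀ (by positivity)]
  have hbound : ((Sᶜ).card : ℝ) ≥ (n : ℝ) * (1023 / 1024) := by
    rw [hSc]; nlinarith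
  nlinarith [hsumlow, mul_le_mul_of_nonneg_right hbound (le_of_lt (by positivity : (0:ℝ) < (k:ℝ)/6))]
end

section
/- With FE as defined (FE(z,x) = 0·1^b·SE(GE(z)₁,x₁)⋯SE(GE(z)ₙ,xₙ)), for any z, z' ∈ [n]^m and any x ≠ x' ∈ {0,1}^n, δ_H(FE(z,x), FE(z',x')) ≥ ζk · δ_H(x, x'); and for any fixed z and any x, x', δ_H(FE(z,x), FE(z,x')) ≤ k · δ_H(x, x'), hence d_H(FE(z,x), FE(z,x')) ≤ d_H(x,x') for the normalized distances. -/
/-- The index set of `{0,1}^N` with `N = 1 + b + k·n`: one special index, `b` indices for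
the block of ones, and `n` blocks `C_j` of `k` indices each. -/
abbrev BigIndex (b n k : ℕ) := (Unit ⊕ Fin b) ⊕ (Fin n × Fin k)

/-- The encoding `FE(z,x) = 0 · 1^b · SE(GE(z)₁, x₁) ⋯ SE(GE(z)ₙ, xₙ) ∈ {0,1}^N`,
`N = 1 + b + k·n`. -/
def FE (b : ℕ) {n m k : ℕ} (SE : Fin n → Bool → Fin k → Bool)
    (GE : (Fin m → Fin n) → Fin n → Fin n)
    (z : Fin m → Fin n) (x : Fin n → Bool) : BigIndex b n k → Bool :=
  fun idx => match idx with
  | Sum.inl (Sum.inl _) => false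
  | Sum.inl (Sum.inr _) => true
  | Sum.inr p => SE (GE z p.1) (x p.1) p.2

lemma FE_dist_eq {n m k b : ℕ} (SE : Fin n → Bool → Fin k → Bool)
    (GE : (Fin m → Fin n) → Fin n → Fin n)
    (z z' : Fin m → Fin n) (x x' : Fin n → Bool) :
    hammingDist (FE b SE GE z x) (FE b SE GE z' x')
      = ∑ j : Fin n, hammingDist (SE (GE z j) (x j)) (SE (GE z' j) (x' j)) := by
  simp only [hammingDist, Finset.filter_univ_mem, Finset.card_filter]
  rw [Fintype.sum_sum_type, Fintype.sum_prod_type]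
  simp [FE]
  exact Finset.sum_congr rfl fun i _ => Finset.sum_congr rfl fun j _ => by split_ifs <;> simp_all

/-- With `FE` as defined: for any `z, z' ∈ [n]^m` and any
`x ≠ x' ∈ {0,1}^n`, `δ_H(FE(z,x), FE(z',x')) ≥ ζk·δ_H(x,x')`; and for any fixed `z` and
any `x, x'`, `δ_H(FE(z,x), FE(z,x')) ≤ k·δ_H(x,x')`, hence
`d_H(FE(z,x), FE(z,x')) ≤ d_H(x,x')` for the normalized distances (`N = 1 + b + kn`). -/
theorem stmt_14 {n m k b : ℕ} (hn : 0 < n) (hk : 0 < k)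
    (ζ : ℝ) (hζ : 0 < ζ) (hζ' : ζ < 1 / 2)
    (SE : Fin n → Bool → Fin k → Bool)
    (GE : (Fin m → Fin n) → Fin n → Fin n)
    (hSE : ∀ (i : Fin n) (a : Bool) (i' : Fin n) (a' : Bool), (i, a) ≠ (i', a') →
      ζ * k ≤ (hammingDist (SE i a) (SE i' a') : ℝ)) :
    (∀ (z z' : Fin m → Fin n) (x x' : Fin n → Bool), x ≠ x' →
      ζ * k * (hammingDist x x' : ℝ) ≤
        (hammingDist (FE b SE GE z x) (FE b SE GE z' x') : ℝ)) ∧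
    (∀ (z : Fin m → Fin n) (x x' : Fin n → Bool),
      hammingDist (FE b SE GE z x) (FE b SE GE z x') ≤ k * hammingDist x x') ∧
    (∀ (z : Fin m → Fin n) (x x' : Fin n → Bool),
      (hammingDist (FE b SE GE z x) (FE b SE GE z x') : ℝ) / ((1 + b + k * n : ℕ) : ℝ) ≤
        (hammingDist x x' : ℝ) / n) := by
  have hub : ∀ (z : Fin m → Fin n) (x x' : Fin n → Bool),
      hammingDist (FE b SE GE z x) (FE b SE GE z x') ≤ k * hammingDist x x' := by
    intro z x x'
    rw [FE_dist_eq]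
    have : hammingDist x x' = ∑ j : Fin n, if x j ≠ x' j then 1 else 0 := by
      simp [hammingDist, Finset.card_filter]
    rw [this, Finset.mul_sum]
    apply Finset.sum_le_sum
    intro j _
    by_cases h : x j = x' j
    · simp [h]
    · simp only [h, if_neg, ne_eq, not_false_eq_true, if_true, mul_one]
      calc hammingDist (SE (GE z j) (x j)) (SE (GE z j) (x' j))
          ≤ Fintype.card (Fin k) := hammingDist_le_card_fintype
        _ = k := by simp
  refine ⟨?_, hub, ?_⟩
  · intro z z' x x' hx
    rw [FE_dist_eq]
    push_cast
    have : (hammingDist x x' : ℝ)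
        = ∑ j : Fin n, if x j ≠ x' j then (1 : ℝ) else 0 := by
      simp [hammingDist, Finset.card_filter]
    rw [this, Finset.mul_sum]
    apply Finset.sum_le_sum
    intro j _
    by_cases h : x j = x' j
    · simp only [h, ne_eq, not_true_eq_false, if_false, mul_zero]
      positivity
    · simp only [ne_eq, h, not_false_eq_true, if_true, mul_one]
      exact hSE _ _ _ _ (by simp [h])
  · intro z x x'
    have h1 := hub z x x'
    have hN : (0:ℝ) < ((1 + b + k * n : ℕ) : ℝ) := by positivity
    rw [div_le_div_iff₀ hN (by exact_mod_cast hn)]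
    calc (hammingDist (FE b SE GE z x) (FE b SE GE z x') : ℝ) * n
        ≤ (k * hammingDist x x' : ℕ) * n := by
          apply mul_le_mul_of_nonneg_right _ (by positivity)
          exact_mod_cast h1
      _ = (hammingDist x x' : ℝ) * (k * n : ℕ) := by push_cast; ring
      _ ≤ (hammingDist x x' : ℝ) * ((1 + b + k * n : ℕ) : ℝ) := by
          apply mul_le_mul_of_nonneg_left _ (by positivity)
          exact_mod_cast Nat.le_add_left _ _
end

section
/- Fix x ∈ {0,1}^n and let z be chosen uniformly at random from [n]^m. Suppose GE : [n]^m → [n]^n has the property that for any set J ⊆ [n] with |J| ≤ ζn, GE(z)|_J is uniformly distributed over [n]^{|J|}, and SE : [n] × {0,1} → {0,1}^k has the property that for fixed a ∈ {0,1}, uniformly random i ∈ [n], and any I ⊆ [k] with |I| ≤ ζk, SE(i,a)|_I is uniform over {0,1}^{|I|}. Then for any query set Q ⊆ [N] with |Q| ≤ ζ·N/(2k) and |Q ∩ C_j| ≤ ζk for every j ∈ [n], the restriction FE(z,x)|_{Q ∖ [b+1]} is uniformly distributed over {0,1}^{|Q ∖ [b+1]|}. -/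
open Finset

lemma count_pi {n m : ℕ} (hn : 0 < n) (GE : (Fin m → Fin n) → Fin n → Fin n)
    (J : Finset (Fin n))
    (hJ : ∀ g : Fin n → Fin n,
      (univ.filter (fun z : Fin m → Fin n => ∀ j ∈ J, GE z j = g j)).card * n ^ J.card = n ^ m)
    (A : Fin n → Finset (Fin n)) :
    (univ.filter (fun z : Fin m → Fin n => ∀ j ∈ J, GE z j ∈ A j)).card * n ^ J.card
      = n ^ m * ∏ j ∈ J, (A j).card := by
  classical
  set g0 : Fin n := ⟨0, hn⟩ with hg0
  set B : Fin n → Finset (Fin n) := fun j => if j ∈ J then A j else {g0} with hB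
  have hset : (univ.filter (fun z : Fin m → Fin n => ∀ j ∈ J, GE z j ∈ A j))
      = (Fintype.piFinset B).biUnion
          (fun g => univ.filter (fun z => ∀ j ∈ J, GE z j = g j)) := by
    ext z
    simp only [mem_biUnion, mem_filter, mem_univ, true_and, Fintype.mem_piFinset]
    constructor
    · intro hz
      refine ⟨fun j => if h : j ∈ J then GE z j else g0, ?_, ?_⟩
      · intro j
        by_cases h : j ∈ J
        · simp [hB, h, hz j h]
        · simp [hB, h]
      · intro j hj; simp [hj]
    · rintro ⟨g, hg, hgz⟩ j hj
      rw [hgz j hj]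
      have := hg j
      simpa [hB, hj] using this
  have hdisj : ∀ g ∈ Fintype.piFinset B, ∀ g' ∈ Fintype.piFinset B, g ≠ g' →
      Disjoint (univ.filter (fun z : Fin m → Fin n => ∀ j ∈ J, GE z j = g j))
        (univ.filter (fun z => ∀ j ∈ J, GE z j = g' j)) := by
    intro g hg g' hg' hne
    rw [Finset.disjoint_left]
    intro z hz hz'
    simp only [mem_filter, mem_univ, true_and] at hz hz'
    apply hne
    funext j
    by_cases h : j ∈ J
    · rw [← hz j h, ← hz' j h]
    · have h1 := Fintype.mem_piFinset.mp hg j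
      have h2 := Fintype.mem_piFinset.mp hg' j
      simp only [hB, h, if_false, mem_singleton] at h1 h2
      rw [h1, h2]
  rw [hset, Finset.card_biUnion hdisj, Finset.sum_mul]
  rw [Finset.sum_congr rfl (fun g _ => hJ g), Finset.sum_const, Fintype.card_piFinset]
  have hprod : ∏ j, (B j).card = ∏ j ∈ J, (A j).card := by
    have : ∀ j, (B j).card = if j ∈ J then (A j).card else 1 := by
      intro j; by_cases h : j ∈ J <;> simp [hB, h]
    rw [Finset.prod_congr rfl (fun j _ => this j), Finset.prod_ite_mem, univ_inter]
  rw [hprod, smul_eq_mul, mul_comm]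


/-- Fix `x ∈ {0,1}^n` and choose `z` uniformly from `[n]^m`. Suppose
projections of `GE(z)` to any `≤ ζn` coordinates are uniform, and projections of
`SE(i,a)` (for uniform `i`) to any `≤ ζk` coordinates are uniform. Then for any query set
`Q ⊆ [N]` with `|Q| ≤ ζ·N/(2k)` and `|Q ∩ C_j| ≤ ζk` for every `j`, the restriction
`FE(z,x)|_{Q ∖ [b+1]}` is uniformly distributed over `{0,1}^{|Q ∖ [b+1]|}`
(here `N = 1 + b + kn ≤ 2kn`, `Q ∖ [b+1]` is the part of `Q` in the blocks `C_j`,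
and uniformity is expressed by exact counting over `z ∈ [n]^m`). -/
theorem stmt_15 {n m k b : ℕ} (hn : 0 < n) (hk : 0 < k) (hN : 1 + b ≤ k * n)
    (ζ : ℝ) (hζ : 0 < ζ) (hζ' : ζ < 1 / 2)
    (SE : Fin n → Bool → Fin k → Bool)
    (GE : (Fin m → Fin n) → Fin n → Fin n)
    (hGE : ∀ J : Finset (Fin n), (J.card : ℝ) ≤ ζ * n → ∀ g : Fin n → Fin n,
      (Finset.univ.filter (fun z : Fin m → Fin n => ∀ j ∈ J, GE z j = g j)).card *
        n ^ J.card = n ^ m)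
    (hSE : ∀ (a : Bool) (I : Finset (Fin k)), (I.card : ℝ) ≤ ζ * k →
      ∀ w : Fin k → Bool,
        (Finset.univ.filter (fun i : Fin n => ∀ t ∈ I, SE i a t = w t)).card *
          2 ^ I.card = n)
    (x : Fin n → Bool) (Q : Finset (BigIndex b n k))
    (hQ : (Q.card : ℝ) ≤ ζ * ((1 + b + k * n : ℕ) : ℝ) / (2 * k))
    (hQC : ∀ j : Fin n,
      ((Q.filter (fun q => ∃ t : Fin k, q = Sum.inr (j, t))).card : ℝ) ≤ ζ * k) :
    ∀ w : BigIndex b n k → Bool,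
      (Finset.univ.filter (fun z : Fin m → Fin n =>
          ∀ q ∈ Q.filter (fun q => q.isRight = true), FE b SE GE z x q = w q)).card *
        2 ^ (Q.filter (fun q => q.isRight = true)).card = n ^ m := by
  classical
  intro w
  set R : Finset (BigIndex b n k) := Q.filter (fun q => q.isRight = true) with hR
  set I : Fin n → Finset (Fin k) :=
    fun j => univ.filter (fun t => Sum.inr (j, t) ∈ Q) with hIdef
  set J : Finset (Fin n) := univ.filter (fun j => (I j).Nonempty) with hJdef
  set Good : Fin n → Finset (Fin n) :=
    fun j => univ.filter (fun i => ∀ t ∈ I j, SE i (x j) t = w (Sum.inr (j, t))) with hGooddef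
  -- card of I j equals card of the filtered Q
  have hIcard : ∀ j, (I j).card
      = (Q.filter (fun q => ∃ t : Fin k, q = Sum.inr (j, t))).card := by
    intro j
    apply Finset.card_bij (fun t _ => Sum.inr (j, t))
    · intro t ht
      simp only [hIdef, mem_filter, mem_univ, true_and] at ht
      simp only [mem_filter]
      exact ⟨ht, t, rfl⟩
    · intro t1 h1 t2 h2 h
      simpa using h
    · intro q hq
      simp only [mem_filter] at hq
      obtain ⟨t, rfl⟩ := hq.2
      exact ⟨t, by simp [hIdef, hq.1], rfl⟩
  have hI : ∀ j, ((I j).card : ℝ) ≤ ζ * k := by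
    intro j; rw [hIcard j]; exact hQC j
  have hGood : ∀ j, (Good j).card * 2 ^ (I j).card = n := by
    intro j
    exact hSE (x j) (I j) (hI j) (fun t => w (Sum.inr (j, t)))
  -- sum of I-cards over all j equals R.card
  have hsum_univ : ∑ j, (I j).card = R.card := by
    have h1 : (univ.filter (fun p : Fin n × Fin k => Sum.inr p ∈ Q)).card = R.card := by
      apply Finset.card_bij (fun p _ => (Sum.inr p : BigIndex b n k))
      · intro p hp
        simp only [mem_filter, mem_univ, true_and] at hp
        simp [hR, hp]
      · intro p1 _ p2 _ h
        simpa using h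
      · intro q hq
        simp only [hR, mem_filter] at hq
        match q, hq with
        | Sum.inr p, hq => exact ⟨p, by simp [hq.1], rfl⟩
    rw [← h1, Finset.card_eq_sum_card_fiberwise
      (f := fun p : Fin n × Fin k => p.1) (t := univ) (fun p _ => mem_univ _)]
    apply Finset.sum_congr rfl
    intro j _
    apply Finset.card_bij (fun t _ => ((j, t) : Fin n × Fin k))
    · intro t ht
      simp only [hIdef, mem_filter, mem_univ, true_and] at ht
      simp [ht]
    · intro t1 _ t2 _ h; simpa using h
    · rintro ⟨j', t⟩ hp
      simp only [mem_filter, mem_univ, true_and] at hp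
      obtain ⟨hq, rfl⟩ := hp
      exact ⟨t, by simp [hIdef, hq], rfl⟩
  have hsum : ∑ j ∈ J, (I j).card = R.card := by
    rw [← hsum_univ]
    apply Finset.sum_subset (subset_univ J)
    intro j _ hj
    simp only [hJdef, mem_filter, mem_univ, true_and, Finset.not_nonempty_iff_eq_empty] at hj
    simp [hj]
  -- |J| ≤ ζ n
  have hJn : (J.card : ℝ) ≤ ζ * n := by
    have h1 : J.card ≤ R.card := by
      rw [← hsum]
      calc J.card = ∑ j ∈ J, 1 := by simp
      _ ≤ ∑ j ∈ J, (I j).card := by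
          apply Finset.sum_le_sum
          intro j hj
          simp only [hJdef, mem_filter] at hj
          exact Finset.Nonempty.card_pos hj.2
    have h2 : R.card ≤ Q.card := Finset.card_filter_le _ _
    have h3 : (Q.card : ℝ) ≤ ζ * n := by
      refine le_trans hQ ?_
      rw [div_le_iff₀ (by positivity)]
      have hNle : ((1 + b + k * n : ℕ) : ℝ) ≤ 2 * (k * n) := by
        push_cast
        have : (1 + b : ℝ) ≤ k * n := by exact_mod_cast hN
        push_cast at this
        linarith
      nlinarith
    calc (J.card : ℝ) ≤ (Q.card : ℝ) := by exact_mod_cast le_trans h1 h2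
    _ ≤ ζ * n := h3
  -- rewrite the z-set
  have hPset : (univ.filter (fun z : Fin m → Fin n =>
        ∀ q ∈ R, FE b SE GE z x q = w q))
      = (univ.filter (fun z : Fin m → Fin n => ∀ j ∈ J, GE z j ∈ Good j)) := by
    ext z
    simp only [mem_filter, mem_univ, true_and]
    constructor
    · intro hz j hj
      simp only [hGooddef, mem_filter, mem_univ, true_and]
      intro t ht
      simp only [hIdef, mem_filter, mem_univ, true_and] at ht
      have hqR : (Sum.inr (j, t) : BigIndex b n k) ∈ R := by
        simp [hR, ht]
      have := hz _ hqR
      simpa [FE] using this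
    · intro hz q hq
      simp only [hR, mem_filter] at hq
      match q, hq with
      | Sum.inr (j, t), hq =>
        have htI : t ∈ I j := by simp [hIdef, hq.1]
        have hjJ : j ∈ J := by
          simp only [hJdef, mem_filter, mem_univ, true_and]
          exact ⟨t, htI⟩
        have := hz j hjJ
        simp only [hGooddef, mem_filter, mem_univ, true_and] at this
        simpa [FE] using this t htI
  have hcp := count_pi hn GE J (hGE J hJn) Good
  rw [hPset]
  -- relate products
  have hprod : (∏ j ∈ J, (Good j).card) * 2 ^ R.card = n ^ J.card := by
    rw [← hsum, ← Finset.prod_pow_eq_pow_sum, ← Finset.prod_mul_distrib]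
    rw [Finset.prod_congr rfl (fun j _ => hGood j)]
    simp
  have hnpos : 0 < n ^ J.card := Nat.pow_pos hn
  apply Nat.eq_of_mul_eq_mul_right hnpos
  calc (univ.filter (fun z : Fin m → Fin n => ∀ j ∈ J, GE z j ∈ Good j)).card
        * 2 ^ R.card * n ^ J.card
      = (univ.filter (fun z : Fin m → Fin n => ∀ j ∈ J, GE z j ∈ Good j)).card
        * n ^ J.card * 2 ^ R.card := by ring
    _ = (n ^ m * ∏ j ∈ J, (Good j).card) * 2 ^ R.card := by rw [hcp]
    _ = n ^ m * ((∏ j ∈ J, (Good j).card) * 2 ^ R.card) := by ring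
    _ = n ^ m * n ^ J.card := by rw [hprod]
end
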